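/- For every integer $n \ge 4$, the number of magic quad squares over the EvenQuads-$2^n$ deck equals $2^n(2^n-1)(2^n-2)(2^n-4)(2^n-8) \cdot \big(10 + 85(2^n - 16) + 43(2^n - 16)(2^n - 32) + (2^n - 16)(2^n - 32)(2^n - 64)\big)$, the expression being evaluated in $\mathbb{Z}$. -/

import Mathlib

/-- A card in the EvenQuads-`2^n` deck, modeled as a vector in `(ℤ/2)^n`. -/
abbrev Deck (n : ℕ) := Fin n → ZMod 2

/-- Identification of the integer `k` (via binary representation) with a card. -/
def numToCard (n k : ℕ) : Deck n := fun i => if Nat.testBit k i.val then 1 else 0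

/-- A quad square is semimagic if every row and every column sums to zero. -/
def IsSemimagic {n : ℕ} (M : Fin 4 × Fin 4 → Deck n) : Prop :=
  (∀ i : Fin 4, ∑ j : Fin 4, M (i, j) = 0) ∧ (∀ j : Fin 4, ∑ i : Fin 4, M (i, j) = 0)

/-- A quad square is magic if it is semimagic and both diagonals sum to zero. -/
def IsMagic {n : ℕ} (M : Fin 4 × Fin 4 → Deck n) : Prop :=
  IsSemimagic M ∧ (∑ i : Fin 4, M (i, i) = 0) ∧ (∑ i : Fin 4, M (i, 3 - i) = 0)

/-- Identification of `Fin 4` with `(ℤ/2)^2` via binary representation. -/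
def finToVec (a : Fin 4) : Fin 2 → ZMod 2 := fun i => if Nat.testBit a.val i.val then 1 else 0

/-- A grid position as an element of `(ℤ/2)^2 × (ℤ/2)^2 ≅ (ℤ/2)^4`. -/
def posVec (p : Fin 4 × Fin 4) : (Fin 2 → ZMod 2) × (Fin 2 → ZMod 2) :=
  (finToVec p.1, finToVec p.2)

/-- A quad square is strongly magic if any four pairwise distinct positions summing to
zero in `(ℤ/2)^4` carry cards summing to zero. -/
def IsStronglyMagic {n : ℕ} (M : Fin 4 × Fin 4 → Deck n) : Prop :=
  ∀ p1 p2 p3 p4 : Fin 4 × Fin 4,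
    p1 ≠ p2 → p1 ≠ p3 → p1 ≠ p4 → p2 ≠ p3 → p2 ≠ p4 → p3 ≠ p4 →
    posVec p1 + posVec p2 + posVec p3 + posVec p4 = 0 →
    M p1 + M p2 + M p3 + M p4 = 0

/-- A quad square is of type C if its first row is `0,1,2,3` and
its first column is `0,4,8,12`. -/
def IsTypeC {n : ℕ} (M : Fin 4 × Fin 4 → Deck n) : Prop :=
  (∀ j : Fin 4, M (0, j) = numToCard n j.val) ∧
  (∀ i : Fin 4, M (i, 0) = numToCard n (4 * i.val))



set_option maxHeartbeats 2000000
set_option maxRecDepth 100000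
set_option linter.unusedSectionVars false

namespace MagicAux

variable {A : Type*} [AddCommGroup A] [Module (ZMod 2) A]

lemma addself (a : A) : a + a = 0 := by
  rw [← two_smul (ZMod 2) a, show (2 : ZMod 2) = 0 from by decide, zero_smul]

lemma add_eq_zero_iff {a b : A} : a + b = 0 ↔ a = b := by
  constructor
  · intro h
    have := congrArg (· + b) h
    simpa [add_assoc, addself] using this
  · rintro rfl; exact addself a

variable {ι : Type*} [Fintype ι] [DecidableEq ι]

/-- Linear combination of the family `w` with `ZMod 2` coefficients `u`. -/
def phiJ (w : ι → A) (u : ι → ZMod 2) : A := ∑ i, u i • w i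

lemma phiJ_add (w : ι → A) (u u' : ι → ZMod 2) :
    phiJ w (u + u') = phiJ w u + phiJ w u' := by
  simp [phiJ, add_smul, Finset.sum_add_distrib]

lemma phiJ_zero (w : ι → A) : phiJ w 0 = 0 := by simp [phiJ]

lemma phiJ_single (w : ι → A) (k : ι) : phiJ w (Pi.single k 1) = w k := by
  rw [phiJ, Finset.sum_eq_single k]
  · simp
  · intro b _ hb; simp [Pi.single_eq_of_ne hb]
  · simp

/-- Independence of a family over `ZMod 2`. -/
def Indep (w : ι → A) : Prop := ∀ u : ι → ZMod 2, phiJ w u = 0 → u = 0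

instance (w : ι → A) [DecidableEq A] : Decidable (Indep w) := by
  unfold Indep; infer_instance

lemma indep_inj {w : ι → A} (h : Indep w) : Function.Injective (phiJ w) := by
  intro u u' e
  have h2 : phiJ w (u + u') = 0 := by
    rw [phiJ_add, e, addself]
  have := h _ h2
  funext i
  have := congrFun this i
  simp only [Pi.add_apply, Pi.zero_apply] at this
  exact add_eq_zero_iff.mp this

variable [DecidableEq A]

/-- The span of a family, as a `Finset`. -/
def spanF (w : ι → A) : Finset A := Finset.image (phiJ w) Finset.univ

lemma mem_spanF {w : ι → A} {x : A} : x ∈ spanF w ↔ ∃ u, phiJ w u = x := by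
  simp [spanF]

lemma self_mem_spanF (w : ι → A) (k : ι) : w k ∈ spanF w :=
  mem_spanF.mpr ⟨Pi.single k 1, phiJ_single w k⟩

lemma card_spanF {w : ι → A} (h : Indep w) :
    (spanF w).card = 2 ^ Fintype.card ι := by
  rw [spanF, Finset.card_image_of_injective _ (indep_inj h), Finset.card_univ,
    Fintype.card_fun]
  simp

lemma card_spanF_le (w : ι → A) : (spanF w).card ≤ 2 ^ Fintype.card ι := by
  refine (Finset.card_image_le).trans ?_
  rw [Finset.card_univ, Fintype.card_fun]
  simp

lemma zmod2_cases (a : ZMod 2) : a = 0 ∨ a = 1 := by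
  revert a; decide

lemma indep_ne {w : ι → A} (h : Indep w) {u : ι → ZMod 2} (hu : u ≠ 0) :
    phiJ w u ≠ 0 := fun e => hu (h u e)

/-- Extending an independent family by a vector outside its span (snoc version). -/
lemma indep_snoc {m : ℕ} {w : Fin m → A} {x : A} :
    Indep (Fin.snoc w x) ↔ Indep w ∧ x ∉ spanF w := by
  constructor
  · intro h
    constructor
    · intro u hu
      have h2 : phiJ (Fin.snoc w x : Fin (m+1) → A) (Fin.snoc u 0) = 0 := by
        rw [phiJ, Fin.sum_univ_castSucc]
        simpa [Fin.snoc_castSucc, Fin.snoc_last, phiJ] using hu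
      have := h _ h2
      funext i
      have := congrFun this i.castSucc
      simpa [Fin.snoc_castSucc] using this
    · intro hx
      obtain ⟨u, hu⟩ := mem_spanF.mp hx
      have h2 : phiJ (Fin.snoc w x : Fin (m+1) → A) (Fin.snoc u 1) = 0 := by
        rw [phiJ, Fin.sum_univ_castSucc]
        simp only [Fin.snoc_castSucc, Fin.snoc_last, one_smul]
        rw [show (∑ i : Fin m, u i • w i) = phiJ w u from rfl, hu]
        exact addself x
      have := congrFun (h _ h2) (Fin.last m)
      simp [Fin.snoc_last] at this
  · rintro ⟨hw, hx⟩ u hu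
    rw [phiJ, Fin.sum_univ_castSucc] at hu
    simp only [Fin.snoc_castSucc, Fin.snoc_last] at hu
    rcases zmod2_cases (u (Fin.last m)) with h0 | h1
    · rw [h0, zero_smul, add_zero] at hu
      have : (fun i : Fin m => u i.castSucc) = 0 := hw _ (by simpa [phiJ] using hu)
      funext i
      refine Fin.lastCases ?_ ?_ i
      · exact h0
      · intro i'; exact congrFun this i'
    · exfalso
      rw [h1, one_smul] at hu
      have : x = phiJ w (fun i => u i.castSucc) := by
        have h2 := add_eq_zero_iff.mp hu
        rw [← h2]; simp [phiJ]
      exact hx (mem_spanF.mpr ⟨_, this.symm⟩)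

lemma indep_reindex {ι' : Type*} [Fintype ι'] [DecidableEq ι'] (e : ι' ≃ ι)
    {w : ι → A} (h : Indep w) : Indep (w ∘ e) := by
  intro u hu
  have : phiJ w (u ∘ e.symm) = 0 := by
    rw [phiJ] at hu ⊢
    rw [← Equiv.sum_comp e (fun i => (u ∘ e.symm) i • w i)]
    simpa using hu
  have := h _ this
  funext i'
  have := congrFun this (e i')
  simpa using this

end MagicAux

namespace MagicAux

section CardIndep
variable {A : Type*} [AddCommGroup A] [Module (ZMod 2) A] [DecidableEq A] [Fintype A]

lemma card_indep (m : ℕ) :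
    Fintype.card {w : Fin m → A // Indep w} =
      ∏ i ∈ Finset.range m, (Fintype.card A - 2 ^ i) := by
  induction m with
  | zero =>
    simp only [Finset.range_zero, Finset.prod_empty]
    have h : ∀ w : Fin 0 → A, Indep w := by
      intro w u _; funext i; exact i.elim0
    rw [Fintype.card_congr (Equiv.subtypeUnivEquiv h), Fintype.card_fun]
    simp
  | succ m ih =>
    have E : {w : Fin (m+1) → A // Indep w} ≃
        Σ p : {w : Fin m → A // Indep w}, {x : A // x ∉ spanF p.val} := {
      toFun := fun p => by
        have h' : Indep (Fin.snoc (Fin.init p.val) (p.val (Fin.last m))) := by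
          rw [Fin.snoc_init_self]; exact p.property
        exact ⟨⟨Fin.init p.val, (indep_snoc.mp h').1⟩,
          ⟨p.val (Fin.last m), (indep_snoc.mp h').2⟩⟩
      invFun := fun q => ⟨Fin.snoc q.1.val q.2.val, indep_snoc.mpr ⟨q.1.property, q.2.property⟩⟩
      left_inv := by
        rintro ⟨w, h⟩
        apply Subtype.ext
        exact Fin.snoc_init_self w
      right_inv := by
        rintro ⟨⟨w, hw⟩, ⟨x, hx⟩⟩
        refine Sigma.ext (Subtype.ext (by simp)) ?_
        rw [Subtype.heq_iff_coe_eq]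
        · simp
        · intro y; simp }
    rw [Fintype.card_congr E, Fintype.card_sigma]
    have hcard : ∀ p : {w : Fin m → A // Indep w},
        Fintype.card {x : A // x ∉ spanF p.val} = Fintype.card A - 2 ^ m := by
      rintro ⟨w, hw⟩
      rw [Fintype.card_subtype_compl, Fintype.card_coe, card_spanF hw]
      simp
    rw [Finset.sum_congr rfl (fun p _ => hcard p)]
    rw [Finset.sum_const, smul_eq_mul, Finset.card_univ, ih, Finset.prod_range_succ]

end CardIndep

end MagicAux

namespace MagicAux

abbrev U7 := Fin 7 → ZMod 2

lemma card_U7 : Fintype.card U7 = 128 := by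
  rw [Fintype.card_fun]; simp

lemma exists_extend : ∀ (k j : ℕ) (hjk : j + k = 7) (w : Fin j → U7), Indep w →
    ∃ b : Fin 7 → U7, Indep b ∧
      ∀ i : Fin j, b ⟨i.val, by omega⟩ = w i := by
  intro k
  induction k with
  | zero =>
    intro j hjk w hw
    refine ⟨fun i => w ⟨i.val, by omega⟩, ?_, ?_⟩
    · have : (fun i : Fin 7 => w ⟨i.val, by omega⟩) = w ∘ (finCongr (by omega : 7 = j)) := by
        funext i; rfl
      rw [this]
      exact indep_reindex _ hw
    · intro i; exact congrArg w (Fin.ext rfl)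
  | succ k ih =>
    intro j hjk w hw
    have hx : ∃ x, x ∉ spanF w := by
      by_contra hc
      push_neg at hc
      have hsub : (Finset.univ : Finset U7) ⊆ spanF w := fun x _ => hc x
      have h1 := Finset.card_le_card hsub
      rw [Finset.card_univ, card_U7] at h1
      have h2 := card_spanF_le w
      rw [Fintype.card_fin] at h2
      have : (2:ℕ) ^ j ≤ 2 ^ 6 := Nat.pow_le_pow_right (by norm_num) (by omega)
      omega
    obtain ⟨x, hx⟩ := hx
    obtain ⟨b, hb, hp⟩ := ih (j+1) (by omega) (Fin.snoc w x) (indep_snoc.mpr ⟨hw, hx⟩)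
    refine ⟨b, hb, ?_⟩
    intro i
    have h2 := hp ⟨i.val, by omega⟩
    have h3 : (⟨(⟨i.val, by omega⟩ : Fin (j+1)).val, by omega⟩ : Fin 7)
        = ⟨i.val, by omega⟩ := rfl
    rw [h3] at h2
    have h4 : (⟨i.val, by omega⟩ : Fin (j+1)) = i.castSucc := by
      apply Fin.ext; simp
    rw [h4, Fin.snoc_castSucc] at h2
    exact h2

section CountKer

variable {V : Type*} [AddCommGroup V] [Module (ZMod 2) V] [DecidableEq V] [Fintype V]

/-- The kernel of the linear map determined by the tuple `v`, as a `Finset` of `U7`. -/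
def Kerf (v : Fin 7 → V) : Finset U7 :=
  Finset.univ.filter (fun u => phiJ v u = 0)

lemma mem_Kerf {v : Fin 7 → V} {u : U7} : u ∈ Kerf v ↔ phiJ v u = 0 := by
  simp [Kerf]

lemma phiJ_phiJ {ι : Type*} [Fintype ι] [DecidableEq ι]
    (v : Fin 7 → V) (b : ι → U7) (t : ι → ZMod 2) :
    phiJ v (phiJ b t) = ∑ s, t s • phiJ v (b s) := by
  simp only [phiJ]
  have h1 : ∀ k, (∑ s, t s • b s) k = ∑ s, t s * b s k := by
    intro k; rw [Finset.sum_apply]; exact Finset.sum_congr rfl fun s _ => rfl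
  calc (∑ k, (∑ s, t s • b s) k • v k)
      = ∑ k, ∑ s, (t s * b s k) • v k := by
        refine Finset.sum_congr rfl fun k _ => ?_
        rw [h1 k, Finset.sum_smul]
    _ = ∑ s, ∑ k, (t s * b s k) • v k := Finset.sum_comm
    _ = ∑ s, t s • ∑ k, b s k • v k := by
        refine Finset.sum_congr rfl fun s _ => ?_
        rw [Finset.smul_sum]
        exact Finset.sum_congr rfl fun k _ => mul_smul _ _ _

lemma count_ker (j : ℕ) (hj : j ≤ 7) (w : Fin j → U7) (hw : Indep w) :
    (Finset.univ.filter (fun v : Fin 7 → V => Kerf v = spanF w)).card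
      = ∏ i ∈ Finset.range (7 - j), (Fintype.card V - 2 ^ i) := by
  obtain ⟨b, hb, hbw⟩ := exists_extend (7 - j) j (by omega) w hw
  have hcι : Fintype.card (Fin j ⊕ Fin (7 - j)) = 7 := by
    rw [Fintype.card_sum, Fintype.card_fin, Fintype.card_fin]; omega
  let e : (Fin j ⊕ Fin (7 - j)) ≃ Fin 7 := finSumFinEquiv.trans (finCongr (by omega))
  set b' : (Fin j ⊕ Fin (7 - j)) → U7 := b ∘ e with hb'def
  have hb' : Indep b' := indep_reindex e hb
  have hb'inl : ∀ a : Fin j, b' (Sum.inl a) = w a := by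
    intro a
    have h1 : e (Sum.inl a) = ⟨a.val, by omega⟩ := by
      apply Fin.ext
      simp [e]
    rw [show b' (Sum.inl a) = b (e (Sum.inl a)) from rfl, h1, hbw a]
  have hbij : Function.Bijective (phiJ b') := by
    rw [Fintype.bijective_iff_injective_and_card]
    refine ⟨indep_inj hb', ?_⟩
    rw [Fintype.card_fun, Fintype.card_fun, hcι, Fintype.card_fin]
  set Φ : (Fin 7 → V) → ((Fin j ⊕ Fin (7 - j)) → V) := fun v s => phiJ v (b' s) with hΦdef
  have hΦbij : Function.Bijective Φ := by
    rw [Fintype.bijective_iff_injective_and_card]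
    constructor
    · intro v v' hvv
      have key : ∀ u : U7, phiJ v u = phiJ v' u := by
        intro u
        obtain ⟨t, rfl⟩ := hbij.2 u
        rw [phiJ_phiJ, phiJ_phiJ]
        exact Finset.sum_congr rfl fun s _ => by rw [show phiJ v (b' s) = phiJ v' (b' s) from congrFun hvv s]
      funext k
      have := key (Pi.single k 1)
      rwa [phiJ_single, phiJ_single] at this
    · rw [Fintype.card_fun, Fintype.card_fun, hcι, Fintype.card_fin]
  have htrans : ∀ v : Fin 7 → V, (Kerf v = spanF w) ↔
      ((∀ a, Φ v (Sum.inl a) = 0) ∧ Indep (fun i2 => Φ v (Sum.inr i2))) := by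
    intro v
    constructor
    · intro hK
      constructor
      · intro a
        have hwa : w a ∈ spanF w := self_mem_spanF w a
        rw [← hK] at hwa
        have h2 := mem_Kerf.mp hwa
        show phiJ v (b' (Sum.inl a)) = 0
        rw [hb'inl a]; exact h2
      · intro u2 hu2
        have hsum : phiJ v (phiJ b' (Sum.elim 0 u2)) = 0 := by
          rw [phiJ_phiJ, Fintype.sum_sum_type]
          simp only [Sum.elim_inl, Sum.elim_inr, Pi.zero_apply, zero_smul,
            Finset.sum_const_zero, zero_add]
          simpa [phiJ, hΦdef] using hu2
        have hmem : phiJ b' (Sum.elim 0 u2) ∈ spanF w := by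
          rw [← hK]; exact mem_Kerf.mpr hsum
        obtain ⟨u', hu'⟩ := mem_spanF.mp hmem
        have h5 : phiJ b' (Sum.elim u' 0) = phiJ w u' := by
          rw [phiJ, Fintype.sum_sum_type]
          simp only [Sum.elim_inl, Sum.elim_inr, Pi.zero_apply, zero_smul,
            Finset.sum_const_zero, add_zero]
          exact Finset.sum_congr rfl fun a _ => by rw [hb'inl a]
        have h6 : Sum.elim u' (0 : Fin (7-j) → ZMod 2) = Sum.elim (0 : Fin j → ZMod 2) u2 := by
          apply indep_inj hb'
          rw [h5, hu']
        funext i2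
        have := congrFun h6 (Sum.inr i2)
        simpa using this.symm
    · rintro ⟨h1, h2⟩
      apply Finset.ext
      intro u
      obtain ⟨t, rfl⟩ := hbij.2 u
      have hsplit : phiJ v (phiJ b' t) = ∑ i2, t (Sum.inr i2) • Φ v (Sum.inr i2) := by
        rw [phiJ_phiJ, Fintype.sum_sum_type]
        have hz : ∀ a : Fin j, t (Sum.inl a) • phiJ v (b' (Sum.inl a)) = 0 := by
          intro a
          rw [show phiJ v (b' (Sum.inl a)) = Φ v (Sum.inl a) from rfl, h1 a, smul_zero]
        rw [Finset.sum_congr rfl (fun a _ => hz a)]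
        simp
        rfl
      constructor
      · intro hker
        have h3 := mem_Kerf.mp hker
        rw [hsplit] at h3
        have h4 : (fun i2 => t (Sum.inr i2)) = 0 := h2 _ (by simpa [phiJ] using h3)
        have h5 : t = Sum.elim (fun a => t (Sum.inl a)) (fun i2 => t (Sum.inr i2)) := by
          funext s; cases s <;> rfl
        rw [mem_spanF]
        refine ⟨fun a => t (Sum.inl a), ?_⟩
        rw [← (by
          rw [phiJ, Fintype.sum_sum_type]
          simp only [Sum.elim_inl, Sum.elim_inr, Pi.zero_apply, zero_smul,
            Finset.sum_const_zero, add_zero]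
          exact Finset.sum_congr rfl fun a _ => by rw [hb'inl a] :
            phiJ b' (Sum.elim (fun a => t (Sum.inl a)) 0) = phiJ w (fun a => t (Sum.inl a)))]
        congr 1
        rw [h5]
        funext s; cases s with
        | inl a => rfl
        | inr i2 => exact (congrFun h4 i2).symm
      · intro hsp
        obtain ⟨u', hu'⟩ := mem_spanF.mp hsp
        have h5 : phiJ b' (Sum.elim u' 0) = phiJ w u' := by
          rw [phiJ, Fintype.sum_sum_type]
          simp only [Sum.elim_inl, Sum.elim_inr, Pi.zero_apply, zero_smul,
            Finset.sum_const_zero, add_zero]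
          exact Finset.sum_congr rfl fun a _ => by rw [hb'inl a]
        have h6 : t = Sum.elim u' 0 := by
          apply indep_inj hb'
          rw [h5, hu']
        rw [mem_Kerf, hsplit, h6]
        simp
  have hstep1 : (Finset.univ.filter (fun v : Fin 7 → V => Kerf v = spanF w)).card
      = (Finset.univ.filter (fun g : (Fin j ⊕ Fin (7 - j)) → V =>
          (∀ a, g (Sum.inl a) = 0) ∧ Indep (fun i2 => g (Sum.inr i2)))).card := by
    apply Finset.card_bij (fun v _ => Φ v)
    · intro v hv
      rw [Finset.mem_filter] at hv ⊢
      exact ⟨Finset.mem_univ _, (htrans v).mp hv.2⟩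
    · intro v _ v' _ h
      exact hΦbij.1 h
    · intro g hg
      obtain ⟨v, rfl⟩ := hΦbij.2 g
      rw [Finset.mem_filter] at hg
      exact ⟨v, Finset.mem_filter.mpr ⟨Finset.mem_univ _, (htrans v).mpr hg.2⟩, rfl⟩
  have hstep2 : (Finset.univ.filter (fun g : (Fin j ⊕ Fin (7 - j)) → V =>
          (∀ a, g (Sum.inl a) = 0) ∧ Indep (fun i2 => g (Sum.inr i2)))).card
      = (Finset.univ.filter (fun g2 : Fin (7 - j) → V => Indep g2)).card := by
    apply Finset.card_bij (fun g _ => (fun i2 => g (Sum.inr i2)))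
    · intro g hg
      rw [Finset.mem_filter] at hg ⊢
      exact ⟨Finset.mem_univ _, hg.2.2⟩
    · intro g hg g' hg' h
      rw [Finset.mem_filter] at hg hg'
      funext s
      cases s with
      | inl a => rw [hg.2.1 a, hg'.2.1 a]
      | inr i2 => exact congrFun h i2
    · intro g2 hg2
      rw [Finset.mem_filter] at hg2
      refine ⟨Sum.elim 0 g2, Finset.mem_filter.mpr ⟨Finset.mem_univ _, fun a => rfl, ?_⟩, rfl⟩
      exact hg2.2
  rw [hstep1, hstep2, ← Fintype.card_subtype, card_indep]

end CountKer

end MagicAux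

namespace MagicAux

/-! ### Encoding of `U7` by natural numbers, and masks for subsets -/

def enc (m : ℕ) : U7 := fun i => if Nat.testBit m i.val then 1 else 0

lemma enc_zero : enc 0 = 0 := by funext i; simp [enc]

lemma enc_xor (m l : ℕ) : enc (m ^^^ l) = enc m + enc l := by
  funext i
  simp only [enc, Nat.testBit_xor, Pi.add_apply]
  cases h1 : Nat.testBit m i.val <;> cases h2 : Nat.testBit l i.val <;> decide

lemma bool_of_zmod {b b' : Bool} :
    ((if b then (1:ZMod 2) else 0) = (if b' then 1 else 0)) → b = b' := by
  cases b <;> cases b' <;> decide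

lemma enc_injOn {m m' : ℕ} (h : m < 128) (h' : m' < 128) (e : enc m = enc m') : m = m' := by
  apply Nat.eq_of_testBit_eq
  intro i
  by_cases hi : i < 7
  · have h2 := congrFun e ⟨i, hi⟩
    simp only [enc] at h2
    exact bool_of_zmod h2
  · have hp : (128:ℕ) ≤ 2 ^ i := by
      calc (128:ℕ) = 2 ^ 7 := rfl
      _ ≤ 2 ^ i := Nat.pow_le_pow_right (by norm_num) (by omega)
    rw [Nat.testBit_lt_two_pow (by omega), Nat.testBit_lt_two_pow (by omega)]

lemma enc_ne_zero {m : ℕ} (h : m < 128) (hm : m ≠ 0) : enc m ≠ 0 := by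
  intro e
  exact hm (enc_injOn h (by norm_num) (by rw [e, enc_zero]))

lemma enc_surj (u : U7) : ∃ m, m < 128 ∧ enc m = u := by
  have hbij : Function.Bijective (fun m : Fin 128 => enc m.val) := by
    rw [Fintype.bijective_iff_injective_and_card]
    constructor
    · intro a b e; exact Fin.ext (enc_injOn a.isLt b.isLt e)
    · rw [Fintype.card_fin, card_U7]
  obtain ⟨⟨m, hm⟩, e⟩ := hbij.2 u
  exact ⟨m, hm, e⟩

def mset (m : ℕ) : Finset ℕ := (Finset.range 128).filter (fun x => Nat.testBit m x)

def msetU (m : ℕ) : Finset U7 := (mset m).image enc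

lemma mem_mset {m x : ℕ} : x ∈ mset m ↔ x < 128 ∧ Nat.testBit m x := by
  simp [mset]

lemma mem_msetU_enc {m x : ℕ} (hx : x < 128) : enc x ∈ msetU m ↔ Nat.testBit m x := by
  constructor
  · rintro h
    obtain ⟨y, hy, e⟩ := Finset.mem_image.mp h
    obtain ⟨hy1, hy2⟩ := mem_mset.mp hy
    rwa [← enc_injOn hy1 hx e]
  · intro h
    exact Finset.mem_image.mpr ⟨x, mem_mset.mpr ⟨hx, h⟩, rfl⟩

lemma mset_or (a b : ℕ) : mset (a ||| b) = mset a ∪ mset b := by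
  ext x; simp [mem_mset, Nat.testBit_or]; tauto

lemma testBit_shift1 (a i : ℕ) : Nat.testBit (1 <<< a) i = decide (a = i) := by
  rw [Nat.shiftLeft_eq, one_mul, Nat.testBit_two_pow]

lemma mset_shift {a : ℕ} (h : a < 128) : mset (1 <<< a) = {a} := by
  ext x
  simp only [mem_mset, testBit_shift1, Finset.mem_singleton, decide_eq_true_eq]
  constructor
  · rintro ⟨_, rfl⟩; rfl
  · rintro rfl; exact ⟨h, rfl⟩

lemma mset_one : mset 1 = {0} := by
  have h0 : (1:ℕ) = 1 <<< 0 := rfl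
  rw [h0, mset_shift (by norm_num)]

lemma shift1_lt {a : ℕ} (h : a < 128) : 1 <<< a < 2 ^ 128 := by
  rw [Nat.shiftLeft_eq, one_mul]
  exact Nat.pow_lt_pow_right (by norm_num) h

lemma land_zero_iff {m d : ℕ} (hm : m < 2 ^ 128) :
    m &&& d = 0 ↔ ∀ i < 128, ¬(m.testBit i = true ∧ d.testBit i = true) := by
  constructor
  · intro h i _ ⟨h1, h2⟩
    have h3 : (m &&& d).testBit i = true := by
      rw [Nat.testBit_land, h1, h2]; rfl
    rw [h, Nat.zero_testBit] at h3
    exact Bool.false_ne_true h3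
  · intro h
    apply Nat.eq_of_testBit_eq
    intro i
    rw [Nat.testBit_land, Nat.zero_testBit]
    by_cases hi : i < 128
    · have := h i hi
      cases hb : m.testBit i <;> cases hb' : d.testBit i <;> simp_all
    · have : m.testBit i = false := Nat.testBit_lt_two_pow
        (lt_of_lt_of_le hm (Nat.pow_le_pow_right (by norm_num) (by omega)))
      rw [this]; rfl

lemma land_zero_not_both {m d : ℕ} (h : m &&& d = 0) (i : ℕ) :
    ¬(m.testBit i = true ∧ d.testBit i = true) := by
  rintro ⟨h1, h2⟩
  have h3 : (m &&& d).testBit i = true := by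
    rw [Nat.testBit_land, h1, h2]; rfl
  rw [h, Nat.zero_testBit] at h3
  exact Bool.false_ne_true h3

/-! ### Enumeration of coefficient vectors and span literals -/

lemma henum1 : ∀ u : Fin 1 → ZMod 2, u = ![0] ∨ u = ![1] := by decide
lemma henum2 : ∀ u : Fin 2 → ZMod 2,
    u = ![0,0] ∨ u = ![1,0] ∨ u = ![0,1] ∨ u = ![1,1] := by decide
lemma henum3 : ∀ u : Fin 3 → ZMod 2,
    u = ![0,0,0] ∨ u = ![1,0,0] ∨ u = ![0,1,0] ∨ u = ![1,1,0] ∨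
    u = ![0,0,1] ∨ u = ![1,0,1] ∨ u = ![0,1,1] ∨ u = ![1,1,1] := by decide

lemma phiJ1 (x : U7) (a : ZMod 2) : phiJ ![x] ![a] = a • x := by
  simp [phiJ]

lemma phiJ2 (x y : U7) (a b : ZMod 2) : phiJ ![x,y] ![a,b] = a • x + b • y := by
  simp [phiJ, Fin.sum_univ_two]

lemma phiJ3 (x y z : U7) (a b c : ZMod 2) :
    phiJ ![x,y,z] ![a,b,c] = a • x + b • y + c • z := by
  simp [phiJ, Fin.sum_univ_three, add_assoc]

lemma span0 (w : Fin 0 → U7) : spanF w = {0} := by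
  ext t
  rw [mem_spanF]
  simp only [Finset.mem_singleton]
  constructor
  · rintro ⟨u, rfl⟩
    rw [show u = 0 from funext fun i => i.elim0]
    exact phiJ_zero w
  · rintro rfl
    exact ⟨0, phiJ_zero w⟩

lemma span1 (x : U7) : spanF ![x] = {0, x} := by
  ext t
  rw [mem_spanF]
  constructor
  · rintro ⟨u, rfl⟩
    rcases henum1 u with rfl | rfl <;> simp [phiJ1]
  · intro ht
    simp only [Finset.mem_insert, Finset.mem_singleton] at ht
    rcases ht with rfl | rfl
    · exact ⟨![0], by simp [phiJ1]⟩
    · exact ⟨![1], by simp [phiJ1]⟩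

lemma span2 (x y : U7) : spanF ![x,y] = {0, x, y, x + y} := by
  ext t
  rw [mem_spanF]
  constructor
  · rintro ⟨u, rfl⟩
    rcases henum2 u with rfl | rfl | rfl | rfl <;> simp [phiJ2]
  · intro ht
    simp only [Finset.mem_insert, Finset.mem_singleton] at ht
    rcases ht with rfl | rfl | rfl | rfl
    · exact ⟨![0,0], by simp [phiJ2]⟩
    · exact ⟨![1,0], by simp [phiJ2]⟩
    · exact ⟨![0,1], by simp [phiJ2]⟩
    · exact ⟨![1,1], by simp [phiJ2]⟩

lemma span3 (x y z : U7) :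
    spanF ![x,y,z] = {0, x, y, x + y, z, x + z, y + z, x + y + z} := by
  ext t
  rw [mem_spanF]
  constructor
  · rintro ⟨u, rfl⟩
    rcases henum3 u with rfl | rfl | rfl | rfl | rfl | rfl | rfl | rfl <;> simp [phiJ3]
  · intro ht
    simp only [Finset.mem_insert, Finset.mem_singleton] at ht
    rcases ht with rfl | rfl | rfl | rfl | rfl | rfl | rfl | rfl
    · exact ⟨![0,0,0], by simp [phiJ3]⟩
    · exact ⟨![1,0,0], by simp [phiJ3]⟩
    · exact ⟨![0,1,0], by simp [phiJ3]⟩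
    · exact ⟨![1,1,0], by simp [phiJ3]⟩
    · exact ⟨![0,0,1], by simp [phiJ3]⟩
    · exact ⟨![1,0,1], by simp [phiJ3]⟩
    · exact ⟨![0,1,1], by simp [phiJ3]⟩
    · exact ⟨![1,1,1], by simp [phiJ3]⟩

lemma indep0 (w : Fin 0 → U7) : Indep w := fun u _ => funext fun i => i.elim0

lemma indep1_of {x : U7} (hx : x ≠ 0) : Indep ![x] := by
  intro u hu
  rcases henum1 u with rfl | rfl
  · exact (by decide : (![0] : Fin 1 → ZMod 2) = 0)
  · rw [phiJ1, one_smul] at hu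
    exact absurd hu hx

lemma indep2_of {x y : U7} (hx : x ≠ 0) (hy : y ≠ 0) (hxy : x + y ≠ 0) :
    Indep ![x,y] := by
  intro u hu
  rcases henum2 u with rfl | rfl | rfl | rfl
  · exact (by decide : (![0,0] : Fin 2 → ZMod 2) = 0)
  · rw [phiJ2] at hu; simp at hu; exact absurd hu hx
  · rw [phiJ2] at hu; simp at hu; exact absurd hu hy
  · rw [phiJ2] at hu; simp at hu; exact absurd hu hxy

lemma indep3_of {x y z : U7} (hx : x ≠ 0) (hy : y ≠ 0) (hz : z ≠ 0)
    (hxy : x + y ≠ 0) (hxz : x + z ≠ 0) (hyz : y + z ≠ 0) (hxyz : x + y + z ≠ 0) :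
    Indep ![x,y,z] := by
  intro u hu
  rcases henum3 u with rfl | rfl | rfl | rfl | rfl | rfl | rfl | rfl
  · exact (by decide : (![0,0,0] : Fin 3 → ZMod 2) = 0)
  · rw [phiJ3] at hu; simp at hu; exact absurd hu hx
  · rw [phiJ3] at hu; simp at hu; exact absurd hu hy
  · rw [phiJ3] at hu; simp at hu; exact absurd hu hxy
  · rw [phiJ3] at hu; simp at hu; exact absurd hu hz
  · rw [phiJ3] at hu; simp at hu; exact absurd hu hxz
  · rw [phiJ3] at hu; simp at hu; exact absurd hu hyz
  · rw [phiJ3] at hu; simp only [one_smul] at hu; exact absurd hu hxyz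

lemma snoc0 (x : U7) : (Fin.snoc ![] x : Fin 1 → U7) = ![x] := by
  funext i; fin_cases i <;> rfl

lemma snoc1 (x y : U7) : (Fin.snoc ![x] y : Fin 2 → U7) = ![x,y] := by
  funext i; fin_cases i <;> rfl

lemma snoc2 (x y z : U7) : (Fin.snoc ![x,y] z : Fin 3 → U7) = ![x,y,z] := by
  funext i; fin_cases i <;> rfl

lemma snoc3 (x y z t : U7) : (Fin.snoc ![x,y,z] t : Fin 4 → U7) = ![x,y,z,t] := by
  funext i; fin_cases i <;> rfl

end MagicAux

namespace MagicAux

/-! ### The concrete data -/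

def DM : ℕ := 294215702288148013469057833359707207550

def CL : List ℕ := [7, 11, 19, 21, 25, 26, 28, 35, 37, 39, 41, 42, 44, 45, 47, 49,
  50, 54, 56, 60, 61, 67, 79, 81, 83, 85, 90, 92, 93, 98, 99, 101, 102, 103, 104,
  106, 107, 108, 115, 117, 119, 121, 125]

def sm1 (a : ℕ) : ℕ := 1 ||| (1 <<< a)
def sm2 (a b : ℕ) : ℕ := sm1 a ||| (1 <<< b) ||| (1 <<< (a ^^^ b))
def sm3 (a b c : ℕ) : ℕ :=
  sm2 a b ||| (1 <<< c) ||| (1 <<< (a ^^^ c)) ||| (1 <<< (b ^^^ c)) ||| (1 <<< (a ^^^ b ^^^ c))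

def K0L : List ℕ := [1]
def K1L : List ℕ := (CL.map sm1).dedup
def K2L : List ℕ :=
  (CL.flatMap (fun a => ((CL.filter (fun b => a < b)).filter (fun b =>
    sm2 a b &&& DM == 0)).map (fun b => sm2 a b))).dedup
def K3L : List ℕ :=
  (CL.flatMap (fun a => (CL.filter (fun b => a < b)).flatMap (fun b =>
    ((CL.filter (fun c => b < c)).filter (fun c => (a ^^^ b ^^^ c != 0) &&
      (sm3 a b c &&& DM == 0))).map (fun c => sm3 a b c)))).dedup

/-- The set of "difference" vectors. -/
def DU : Finset U7 := msetU DM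

/-- The collection of subspaces (as `Finset`s of `U7`) encoded by a list of masks. -/
def SS (L : List ℕ) : Finset (Finset U7) := (L.map msetU).toFinset

lemma mem_SS {L : List ℕ} {K : Finset U7} : K ∈ SS L ↔ ∃ m ∈ L, msetU m = K := by
  simp [SS]

/-! ### Decidable facts about the data -/

lemma CL_facts : ∀ a ∈ CL, a < 128 ∧ 0 < a ∧ DM.testBit a = false := by decide

lemma CL_complete : ∀ m ∈ Finset.range 128, m ≠ 0 → DM.testBit m = false → m ∈ CL := by
  decide

lemma DM_facts : DM.testBit 0 = false ∧ DM < 2 ^ 128 := by decide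

lemma mem_CL_of {m : ℕ} (h1 : m < 128) (h2 : m ≠ 0) (h3 : DM.testBit m = false) :
    m ∈ CL :=
  CL_complete m (Finset.mem_range.mpr h1) h2 h3

/-! ### Bit structure of the span masks -/

lemma testBit_one' (i : ℕ) : Nat.testBit 1 i = decide (0 = i) := testBit_shift1 0 i

lemma testBit_sm1 {a i : ℕ} :
    Nat.testBit (sm1 a) i = true ↔ i = 0 ∨ i = a := by
  simp only [sm1, Nat.testBit_or, testBit_one', testBit_shift1, Bool.or_eq_true,
    decide_eq_true_eq]
  constructor
  · rintro (rfl | rfl)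
    · left; rfl
    · right; rfl
  · rintro (rfl | rfl)
    · left; rfl
    · right; rfl

lemma testBit_sm2 {a b i : ℕ} :
    Nat.testBit (sm2 a b) i = true ↔ i = 0 ∨ i = a ∨ i = b ∨ i = a ^^^ b := by
  simp only [sm2, Nat.testBit_or, Bool.or_eq_true, testBit_shift1, decide_eq_true_eq]
  rw [show (Nat.testBit (sm1 a) i = true ↔ i = 0 ∨ i = a) from testBit_sm1]
  constructor
  · rintro (((h | h) | rfl) | rfl) <;> tauto
  · rintro (rfl | rfl | rfl | rfl) <;> tauto

lemma testBit_sm3 {a b c i : ℕ} :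
    Nat.testBit (sm3 a b c) i = true ↔
      i = 0 ∨ i = a ∨ i = b ∨ i = a ^^^ b ∨ i = c ∨ i = a ^^^ c ∨ i = b ^^^ c ∨
        i = a ^^^ b ^^^ c := by
  simp only [sm3, Nat.testBit_or, Bool.or_eq_true, testBit_shift1, decide_eq_true_eq]
  rw [show (Nat.testBit (sm2 a b) i = true ↔ i = 0 ∨ i = a ∨ i = b ∨ i = a ^^^ b) from
    testBit_sm2]
  constructor
  · rintro ((((h | rfl) | rfl) | rfl) | rfl) <;> tauto
  · rintro (rfl | rfl | rfl | rfl | rfl | rfl | rfl | rfl) <;> tauto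

lemma sm1_lt {a : ℕ} (ha : a < 128) : sm1 a < 2 ^ 128 := by
  apply Nat.or_lt_two_pow
  · norm_num
  · exact shift1_lt ha

lemma sm2_lt {a b : ℕ} (ha : a < 128) (hb : b < 128) : sm2 a b < 2 ^ 128 := by
  have hx : a ^^^ b < 128 := Nat.xor_lt_two_pow (n := 7) ha hb
  exact Nat.or_lt_two_pow (Nat.or_lt_two_pow (sm1_lt ha) (shift1_lt hb)) (shift1_lt hx)

lemma sm3_lt {a b c : ℕ} (ha : a < 128) (hb : b < 128) (hc : c < 128) :
    sm3 a b c < 2 ^ 128 := by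
  have h1 : a ^^^ b < 128 := Nat.xor_lt_two_pow (n := 7) ha hb
  have h2 : a ^^^ c < 128 := Nat.xor_lt_two_pow (n := 7) ha hc
  have h3 : b ^^^ c < 128 := Nat.xor_lt_two_pow (n := 7) hb hc
  have h4 : a ^^^ b ^^^ c < 128 := Nat.xor_lt_two_pow (n := 7) h1 hc
  exact Nat.or_lt_two_pow (Nat.or_lt_two_pow (Nat.or_lt_two_pow
    (Nat.or_lt_two_pow (sm2_lt ha hb) (shift1_lt hc)) (shift1_lt h2))
    (shift1_lt h3)) (shift1_lt h4)

/-! ### `msetU` of the span masks -/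

lemma msetU_one : msetU 1 = {(0 : U7)} := by
  rw [msetU, mset_one]
  simp [enc_zero]

lemma msetU_sm1 {a : ℕ} (ha : a < 128) : msetU (sm1 a) = spanF ![enc a] := by
  rw [span1, msetU, sm1, mset_or, mset_one, mset_shift ha, Finset.image_union]
  simp only [Finset.image_singleton, enc_zero]
  ext t
  simp only [Finset.mem_union, Finset.mem_singleton, Finset.mem_insert]
  try tauto

lemma msetU_sm2 {a b : ℕ} (ha : a < 128) (hb : b < 128) :
    msetU (sm2 a b) = spanF ![enc a, enc b] := by
  have hx : a ^^^ b < 128 := Nat.xor_lt_two_pow (n := 7) ha hb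
  rw [span2, msetU, sm2, mset_or, mset_or, sm1, mset_or, mset_one,
    mset_shift ha, mset_shift hb, mset_shift hx,
    Finset.image_union, Finset.image_union, Finset.image_union]
  simp only [Finset.image_singleton, enc_zero, enc_xor]
  ext t
  simp only [Finset.mem_union, Finset.mem_singleton, Finset.mem_insert]
  tauto

lemma msetU_sm3 {a b c : ℕ} (ha : a < 128) (hb : b < 128) (hc : c < 128) :
    msetU (sm3 a b c) = spanF ![enc a, enc b, enc c] := by
  have h1 : a ^^^ b < 128 := Nat.xor_lt_two_pow (n := 7) ha hb
  have h2 : a ^^^ c < 128 := Nat.xor_lt_two_pow (n := 7) ha hc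
  have h3 : b ^^^ c < 128 := Nat.xor_lt_two_pow (n := 7) hb hc
  have h4 : a ^^^ b ^^^ c < 128 := Nat.xor_lt_two_pow (n := 7) h1 hc
  rw [span3, msetU, sm3, mset_or, mset_or, mset_or, mset_or, sm2, mset_or, mset_or, sm1,
    mset_or, mset_one, mset_shift ha, mset_shift hb, mset_shift hc, mset_shift h1,
    mset_shift h2, mset_shift h3, mset_shift h4]
  simp only [Finset.image_union, Finset.image_singleton, enc_zero, enc_xor]
  ext t
  simp only [Finset.mem_union, Finset.mem_singleton, Finset.mem_insert]
  tauto

end MagicAux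

namespace MagicAux

/-! ### Membership in the mask lists -/

lemma mem_K1L {m : ℕ} : m ∈ K1L ↔ ∃ a ∈ CL, m = sm1 a := by
  unfold K1L
  rw [List.mem_dedup]
  simp only [List.mem_map]
  constructor
  · rintro ⟨a, ha, rfl⟩; exact ⟨a, ha, rfl⟩
  · rintro ⟨a, ha, rfl⟩; exact ⟨a, ha, rfl⟩

lemma mem_K2L {m : ℕ} : m ∈ K2L ↔
    ∃ a ∈ CL, ∃ b ∈ CL, a < b ∧ sm2 a b &&& DM = 0 ∧ m = sm2 a b := by
  unfold K2L
  rw [List.mem_dedup]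
  simp only [List.mem_flatMap, List.mem_map, List.mem_filter, decide_eq_true_eq,
    beq_iff_eq]
  constructor
  · rintro ⟨a, ha, b, ⟨⟨hb, hab⟩, hm0⟩, rfl⟩
    exact ⟨a, ha, b, hb, hab, hm0, rfl⟩
  · rintro ⟨a, ha, b, hb, hab, hm0, rfl⟩
    exact ⟨a, ha, b, ⟨⟨hb, hab⟩, hm0⟩, rfl⟩

lemma mem_K3L {m : ℕ} : m ∈ K3L ↔
    ∃ a ∈ CL, ∃ b ∈ CL, ∃ c ∈ CL, a < b ∧ b < c ∧ a ^^^ b ^^^ c ≠ 0 ∧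
      sm3 a b c &&& DM = 0 ∧ m = sm3 a b c := by
  unfold K3L
  rw [List.mem_dedup]
  simp only [List.mem_flatMap, List.mem_map, List.mem_filter, decide_eq_true_eq,
    Bool.and_eq_true, bne_iff_ne, ne_eq, beq_iff_eq]
  constructor
  · rintro ⟨a, ha, b, ⟨hb, hab⟩, c, ⟨⟨hc, hbc⟩, hne, hm0⟩, rfl⟩
    exact ⟨a, ha, b, hb, c, hc, hab, hbc, hne, hm0, rfl⟩
  · rintro ⟨a, ha, b, hb, c, hc, hab, hbc, hne, hm0, rfl⟩
    exact ⟨a, ha, b, ⟨hb, hab⟩, c, ⟨⟨hc, hbc⟩, hne, hm0⟩, rfl⟩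

/-! ### Reindexing spans -/

lemma phiJ_reindex {A : Type*} [AddCommGroup A] [Module (ZMod 2) A]
    {ι ι' : Type*} [Fintype ι] [DecidableEq ι] [Fintype ι'] [DecidableEq ι']
    (e : ι' ≃ ι) (w : ι → A) (u : ι' → ZMod 2) :
    phiJ (w ∘ e) u = phiJ w (u ∘ e.symm) := by
  rw [phiJ, phiJ, ← Equiv.sum_comp e (fun i => (u ∘ e.symm) i • w i)]
  simp

lemma spanF_reindex {A : Type*} [AddCommGroup A] [Module (ZMod 2) A] [DecidableEq A]
    {ι ι' : Type*} [Fintype ι] [DecidableEq ι] [Fintype ι'] [DecidableEq ι']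
    (e : ι' ≃ ι) (w : ι → A) : spanF (w ∘ e) = spanF w := by
  ext t
  rw [mem_spanF, mem_spanF]
  constructor
  · rintro ⟨u, rfl⟩
    exact ⟨u ∘ e.symm, (phiJ_reindex e w u).symm⟩
  · rintro ⟨u, rfl⟩
    refine ⟨u ∘ e, ?_⟩
    rw [phiJ_reindex e w (u ∘ e)]
    congr 1
    funext i
    simp

lemma span3_comp (x y z : U7) (c : Fin 3 → Fin 3) (hc : Function.Bijective c) :
    spanF (![x,y,z] ∘ c) = spanF ![x,y,z] :=
  spanF_reindex (Equiv.ofBijective c hc) ![x,y,z]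

lemma span2_comp (x y : U7) (c : Fin 2 → Fin 2) (hc : Function.Bijective c) :
    spanF (![x,y] ∘ c) = spanF ![x,y] :=
  spanF_reindex (Equiv.ofBijective c hc) ![x,y]

/-! ### `h`-vector data -/

def hL : Fin 4 → Fin 4 → ℕ := ![![0,86,31,73],![126,68,59,1],![14,2,4,8],![112,16,32,64]]

def hU (p : Fin 4 × Fin 4) : U7 := enc (hL p.1 p.2)

lemma hL_facts : ∀ p q : Fin 4 × Fin 4, p ≠ q →
    (hL p.1 p.2 ^^^ hL q.1 q.2) < 128 ∧ DM.testBit (hL p.1 p.2 ^^^ hL q.1 q.2) = true := by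
  decide

lemma hL_cover : ∀ m ∈ Finset.range 128, DM.testBit m = true →
    ∃ p q : Fin 4 × Fin 4, p ≠ q ∧ hL p.1 p.2 ^^^ hL q.1 q.2 = m := by
  decide

lemma hU_mem_DU {p q : Fin 4 × Fin 4} (h : p ≠ q) : hU p + hU q ∈ DU := by
  obtain ⟨h1, h2⟩ := hL_facts p q h
  rw [hU, hU, ← enc_xor, DU]
  exact (mem_msetU_enc h1).mpr h2

lemma DU_covered : ∀ u ∈ DU, ∃ p q : Fin 4 × Fin 4, p ≠ q ∧ hU p + hU q = u := by
  intro u hu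
  obtain ⟨x, hx, rfl⟩ := Finset.mem_image.mp hu
  obtain ⟨hx1, hx2⟩ := mem_mset.mp hx
  obtain ⟨p, q, hpq, he⟩ := hL_cover x (Finset.mem_range.mpr hx1) hx2
  exact ⟨p, q, hpq, by rw [hU, hU, ← enc_xor, he]⟩

lemma not_mem_DU {x : ℕ} (hx : x < 128) (hD : DM.testBit x = false) : enc x ∉ DU := by
  intro h
  rw [DU, mem_msetU_enc hx, hD] at h
  exact Bool.false_ne_true h

lemma not_testBit_DM_of {K : Finset U7} (hd : ∀ u ∈ K, u ∉ DU) {x : ℕ} (hx : x < 128)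
    (hxK : enc x ∈ K) : DM.testBit x = false := by
  cases hb : DM.testBit x
  · rfl
  · exact absurd ((mem_msetU_enc hx).mpr hb) (hd _ hxK)

lemma land_DM_of {K : Finset U7} (hd : ∀ u ∈ K, u ∉ DU) {m : ℕ} (hm : m < 2 ^ 128)
    (hsub : msetU m ⊆ K) : m &&& DM = 0 := by
  rw [land_zero_iff hm]
  rintro i hi ⟨h1, h2⟩
  have h3 : enc i ∈ msetU m := Finset.mem_image.mpr ⟨i, mem_mset.mpr ⟨hi, h1⟩, rfl⟩
  exact hd _ (hsub h3) ((mem_msetU_enc hi).mpr h2)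

/-! ### Pigeonhole: kernels avoiding `DU` have at most 8 elements -/

lemma ker_card_le {K : Finset U7} (hcl : ∀ a ∈ K, ∀ b ∈ K, a + b ∈ K)
    (hd : ∀ u ∈ K, u ∉ DU) : K.card ≤ 8 := by
  have hinj : Function.Injective
      (fun pc : (Fin 4 × Fin 4) × {x // x ∈ K} => hU pc.1 + pc.2.val) := by
    rintro ⟨p, x, hx⟩ ⟨q, y, hy⟩ h
    simp only at h
    by_cases hpq : p = q
    · subst hpq
      have : x = y := by
        have := add_left_cancel h
        exact this
      simp [this]
    · exfalso
      have h3 : (hU p + hU q) + (x + y) = 0 := by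
        have h2 : (hU p + x) + (hU q + y) = 0 := by rw [h, addself]
        calc (hU p + hU q) + (x + y) = (hU p + x) + (hU q + y) := by abel
        _ = 0 := h2
      have h4 : hU p + hU q = x + y := add_eq_zero_iff.mp h3
      have h5 : x + y ∈ K := hcl x hx y hy
      rw [← h4] at h5
      exact hd _ h5 (hU_mem_DU hpq)
  have hcard := Fintype.card_le_of_injective _ hinj
  rw [card_U7, Fintype.card_prod, Fintype.card_coe] at hcard
  have h16 : Fintype.card (Fin 4 × Fin 4) = 16 := by simp
  rw [h16] at hcard
  omega

lemma spanF_subset {K : Finset U7} {j : ℕ} (w : Fin j → U7) (h0 : (0:U7) ∈ K)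
    (hcl : ∀ a ∈ K, ∀ b ∈ K, a + b ∈ K) (hw : ∀ i, w i ∈ K) : spanF w ⊆ K := by
  intro x hx
  obtain ⟨u, rfl⟩ := mem_spanF.mp hx
  rw [phiJ]
  refine Finset.sum_induction _ (· ∈ K) (fun a b ha hb => hcl a ha b hb) h0 ?_
  intro i _
  rcases zmod2_cases (u i) with h | h <;> rw [h]
  · rw [zero_smul]; exact h0
  · rw [one_smul]; exact hw i

end MagicAux

namespace MagicAux

lemma ne_zero_of_enc {m : ℕ} (h : enc m ≠ 0) : m ≠ 0 :=
  fun e => h (by rw [e, enc_zero])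

lemma decode_mem {K : Finset U7} (hd : ∀ u ∈ K, u ∉ DU) {x : U7} (hxK : x ∈ K)
    (hx0 : x ≠ 0) : ∃ a, a < 128 ∧ a ∈ CL ∧ enc a = x := by
  obtain ⟨a, ha, rfl⟩ := enc_surj x
  have ha0 : a ≠ 0 := fun h => hx0 (by rw [h, enc_zero])
  exact ⟨a, ha, mem_CL_of ha ha0 (not_testBit_DM_of hd ha hxK), rfl⟩

lemma ker_mem_SS {K : Finset U7} (h0 : (0:U7) ∈ K)
    (hcl : ∀ a ∈ K, ∀ b ∈ K, a + b ∈ K) (hd : ∀ u ∈ K, u ∉ DU) :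
    K ∈ SS K0L ∨ K ∈ SS K1L ∨ K ∈ SS K2L ∨ K ∈ SS K3L := by
  by_cases h1 : K ⊆ spanF (![] : Fin 0 → U7)
  · left
    have hKeq : K = {(0:U7)} := by
      apply Finset.Subset.antisymm
      · rwa [span0] at h1
      · simpa using h0
    exact mem_SS.mpr ⟨1, by simp [K0L], by rw [msetU_one, hKeq]⟩
  obtain ⟨x, hxK, hx0'⟩ := Finset.not_subset.mp h1
  have hx0 : x ≠ 0 := by
    rw [span0] at hx0'; simpa using hx0'
  have hi1 : Indep ![x] := by
    rw [← snoc0]; exact indep_snoc.mpr ⟨indep0 _, hx0'⟩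
  by_cases h2 : K ⊆ spanF ![x]
  · right; left
    have hKeq : K = spanF ![x] :=
      Finset.Subset.antisymm h2 (spanF_subset _ h0 hcl (fun i => by fin_cases i; exact hxK))
    obtain ⟨a, ha128, haCL, hax⟩ := decode_mem hd hxK hx0
    refine mem_SS.mpr ⟨sm1 a, mem_K1L.mpr ⟨a, haCL, rfl⟩, ?_⟩
    rw [msetU_sm1 ha128, hax, hKeq]
  obtain ⟨y, hyK, hy2⟩ := Finset.not_subset.mp h2
  have hyx : y ≠ x := by
    intro h; rw [span1] at hy2; simp [h] at hy2
  have hy0 : y ≠ 0 := by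
    intro h; rw [span1] at hy2; simp [h] at hy2
  have hi2 : Indep ![x,y] := by
    rw [← snoc1]; exact indep_snoc.mpr ⟨hi1, hy2⟩
  by_cases h3 : K ⊆ spanF ![x,y]
  · right; right; left
    have hKeq : K = spanF ![x,y] :=
      Finset.Subset.antisymm h3 (spanF_subset _ h0 hcl (fun i => by
        fin_cases i
        · exact hxK
        · exact hyK))
    obtain ⟨a, ha128, haCL, hax⟩ := decode_mem hd hxK hx0
    obtain ⟨b, hb128, hbCL, hbx⟩ := decode_mem hd hyK hy0
    have main2 : ∀ p q : ℕ, p ∈ CL → q ∈ CL → p < q →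
        spanF ![enc p, enc q] = K → K ∈ SS K2L := by
      intro p q hp hq hpq hsp
      have hp128 := (CL_facts p hp).1
      have hq128 := (CL_facts q hq).1
      have hsub : msetU (sm2 p q) ⊆ K := by
        rw [msetU_sm2 hp128 hq128, hsp]
      have hland := land_DM_of hd (sm2_lt hp128 hq128) hsub
      exact mem_SS.mpr ⟨sm2 p q, mem_K2L.mpr ⟨p, hp, q, hq, hpq, hland, rfl⟩,
        by rw [msetU_sm2 hp128 hq128]; exact hsp⟩
    have hab : a ≠ b := by
      intro h; rw [h, hbx] at hax; exact hyx hax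
    have hswap : spanF ![enc b, enc a] = spanF ![enc a, enc b] := by
      have hco : ![enc b, enc a] = ![enc a, enc b] ∘ ![1,0] := by
        funext i; fin_cases i <;> rfl
      rw [hco]
      exact span2_comp _ _ _ (by decide)
    rcases Nat.lt_or_ge a b with h | h
    · exact main2 a b haCL hbCL h (by rw [hax, hbx, ← hKeq])
    · have h' : b < a := by omega
      exact main2 b a hbCL haCL h' (by rw [hswap, hax, hbx, ← hKeq])
  obtain ⟨z, hzK, hz3⟩ := Finset.not_subset.mp h3
  have hsp2 : spanF ![x,y] = {0, x, y, x+y} := span2 x y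
  have hz0 : z ≠ 0 := by intro h; rw [hsp2, h] at hz3; simp at hz3
  have hzx : z ≠ x := by intro h; rw [hsp2, h] at hz3; simp at hz3
  have hzy : z ≠ y := by intro h; rw [hsp2, h] at hz3; simp at hz3
  have hi3 : Indep ![x,y,z] := by
    rw [← snoc2]; exact indep_snoc.mpr ⟨hi2, hz3⟩
  by_cases h4 : K ⊆ spanF ![x,y,z]
  · right; right; right
    have hKeq : K = spanF ![x,y,z] :=
      Finset.Subset.antisymm h4 (spanF_subset _ h0 hcl (fun i => by
        fin_cases i
        · exact hxK
        · exact hyK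
        · exact hzK))
    obtain ⟨a, ha128, haCL, hax⟩ := decode_mem hd hxK hx0
    obtain ⟨b, hb128, hbCL, hbx⟩ := decode_mem hd hyK hy0
    obtain ⟨c, hc128, hcCL, hcx⟩ := decode_mem hd hzK hz0
    have hsum : x + y + z ≠ 0 := by
      have := indep_ne hi3 (u := ![1,1,1]) (by decide)
      rwa [phiJ3, one_smul, one_smul, one_smul] at this
    have main3 : ∀ p q r : ℕ, p ∈ CL → q ∈ CL → r ∈ CL → p < q → q < r →
        enc p + enc q + enc r ≠ 0 →
        spanF ![enc p, enc q, enc r] = K → K ∈ SS K3L := by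
      intro p q r hp hq hr hpq hqr hne hsp
      have hp128 := (CL_facts p hp).1
      have hq128 := (CL_facts q hq).1
      have hr128 := (CL_facts r hr).1
      have hsub : msetU (sm3 p q r) ⊆ K := by
        rw [msetU_sm3 hp128 hq128 hr128, hsp]
      have hland := land_DM_of hd (sm3_lt hp128 hq128 hr128) hsub
      have hxor : p ^^^ q ^^^ r ≠ 0 := by
        intro h
        exact hne (by rw [← enc_xor, ← enc_xor, h, enc_zero])
      exact mem_SS.mpr ⟨sm3 p q r,
        mem_K3L.mpr ⟨p, hp, q, hq, r, hr, hpq, hqr, hxor, hland, rfl⟩,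
        by rw [msetU_sm3 hp128 hq128 hr128]; exact hsp⟩
    -- helper equalities of spans for the six orders
    have hperm : ∀ (cp : Fin 3 → Fin 3), Function.Bijective cp →
        spanF (![x,y,z] ∘ cp) = K := by
      intro cp hcp
      rw [span3_comp _ _ _ cp hcp, ← hKeq]
    have hab : a ≠ b := fun h => hyx (by rw [← hbx, ← h, hax])
    have hac : a ≠ c := fun h => hzx (by rw [← hcx, ← h, hax])
    have hbc : b ≠ c := fun h => hzy (by rw [← hcx, ← h, hbx])
    rcases Nat.lt_trichotomy a b with h1' | h1' | h1'
    · rcases Nat.lt_trichotomy b c with h2' | h2' | h2'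
      · -- a < b < c
        refine main3 a b c haCL hbCL hcCL h1' h2' ?_ ?_
        · rw [hax, hbx, hcx]; exact hsum
        · rw [hax, hbx, hcx, ← hKeq]
      · exact absurd h2' hbc
      · rcases Nat.lt_trichotomy a c with h3' | h3' | h3'
        · -- a < c < b
          refine main3 a c b haCL hcCL hbCL h3' h2' ?_ ?_
          · rw [hax, hbx, hcx]; intro h; apply hsum; rw [← h]; abel
          · have hco : ![enc a, enc c, enc b] = ![x,y,z] ∘ ![0,2,1] := by
              funext i; fin_cases i <;> simp [hax, hbx, hcx] <;> rfl
            rw [hco]; exact hperm _ (by decide)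
        · exact absurd h3' hac
        · -- c < a < b
          refine main3 c a b hcCL haCL hbCL h3' h1' ?_ ?_
          · rw [hax, hbx, hcx]; intro h; apply hsum; rw [← h]; abel
          · have hco : ![enc c, enc a, enc b] = ![x,y,z] ∘ ![2,0,1] := by
              funext i; fin_cases i <;> simp [hax, hbx, hcx] <;> rfl
            rw [hco]; exact hperm _ (by decide)
    · exact absurd h1' hab
    · rcases Nat.lt_trichotomy a c with h2' | h2' | h2'
      · -- b < a < c
        refine main3 b a c hbCL haCL hcCL h1' h2' ?_ ?_
        · rw [hax, hbx, hcx]; intro h; apply hsum; rw [← h]; abel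
        · have hco : ![enc b, enc a, enc c] = ![x,y,z] ∘ ![1,0,2] := by
            funext i; fin_cases i <;> simp [hax, hbx, hcx] <;> rfl
          rw [hco]; exact hperm _ (by decide)
      · exact absurd h2' hac
      · rcases Nat.lt_trichotomy b c with h3' | h3' | h3'
        · -- b < c < a
          refine main3 b c a hbCL hcCL haCL h3' h2' ?_ ?_
          · rw [hax, hbx, hcx]; intro h; apply hsum; rw [← h]; abel
          · have hco : ![enc b, enc c, enc a] = ![x,y,z] ∘ ![1,2,0] := by
              funext i; fin_cases i <;> simp [hax, hbx, hcx] <;> rfl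
            rw [hco]; exact hperm _ (by decide)
        · exact absurd h3' hbc
        · -- c < b < a
          refine main3 c b a hcCL hbCL haCL h3' h1' ?_ ?_
          · rw [hax, hbx, hcx]; intro h; apply hsum; rw [← h]; abel
          · have hco : ![enc c, enc b, enc a] = ![x,y,z] ∘ ![2,1,0] := by
              funext i; fin_cases i <;> simp [hax, hbx, hcx] <;> rfl
            rw [hco]; exact hperm _ (by decide)
  · exfalso
    obtain ⟨t, htK, ht4⟩ := Finset.not_subset.mp h4
    have hi4 : Indep ![x,y,z,t] := by
      rw [← snoc3]; exact indep_snoc.mpr ⟨hi3, ht4⟩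
    have hsub : spanF ![x,y,z,t] ⊆ K := spanF_subset _ h0 hcl (fun i => by
      fin_cases i
      · exact hxK
      · exact hyK
      · exact hzK
      · exact htK)
    have hcard1 := Finset.card_le_card hsub
    rw [card_spanF hi4, Fintype.card_fin] at hcard1
    have hcard2 := ker_card_le hcl hd
    norm_num at hcard1
    omega

end MagicAux

namespace MagicAux

lemma nat_xor_ne_zero {a b : ℕ} (h : a ≠ b) : a ^^^ b ≠ 0 := by
  intro e
  apply h
  have h2 := congrArg (· ^^^ b) e
  simpa [Nat.xor_assoc] using h2

lemma disj_DU_of_land {m : ℕ} (h : m &&& DM = 0) : ∀ u ∈ msetU m, u ∉ DU := by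
  intro u hu hD
  obtain ⟨i, hi, rfl⟩ := Finset.mem_image.mp hu
  obtain ⟨hi1, hi2⟩ := mem_mset.mp hi
  exact land_zero_not_both h i ⟨hi2, (mem_msetU_enc hi1).mp hD⟩

/-- The representation property of members of the mask collections. -/
def RepP (j : ℕ) (K : Finset U7) : Prop :=
  ∃ w : Fin j → U7, Indep w ∧ K = spanF w ∧ ∀ u ∈ K, u ∉ DU

lemma rep0 {K : Finset U7} (h : K ∈ SS K0L) : RepP 0 K := by
  obtain ⟨m, hm, rfl⟩ := mem_SS.mp h
  have hm1 : m = 1 := by simpa [K0L] using hm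
  subst hm1
  refine ⟨![], indep0 _, by rw [msetU_one, span0], ?_⟩
  intro u hu
  rw [msetU_one] at hu
  simp only [Finset.mem_singleton] at hu
  subst hu
  rw [← enc_zero]
  exact not_mem_DU (by norm_num) DM_facts.1

lemma rep1 {K : Finset U7} (h : K ∈ SS K1L) : RepP 1 K := by
  obtain ⟨m, hm, rfl⟩ := mem_SS.mp h
  obtain ⟨a, haCL, rfl⟩ := mem_K1L.mp hm
  obtain ⟨ha128, hapos, haD⟩ := CL_facts a haCL
  have hland : sm1 a &&& DM = 0 := by
    rw [land_zero_iff (sm1_lt ha128)]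
    rintro i hi ⟨h1, h2⟩
    rcases testBit_sm1.mp h1 with rfl | rfl
    · rw [DM_facts.1] at h2; exact Bool.false_ne_true h2
    · rw [haD] at h2; exact Bool.false_ne_true h2
  exact ⟨![enc a], indep1_of (enc_ne_zero ha128 (by omega)),
    msetU_sm1 ha128, disj_DU_of_land hland⟩

lemma rep2 {K : Finset U7} (h : K ∈ SS K2L) : RepP 2 K := by
  obtain ⟨m, hm, rfl⟩ := mem_SS.mp h
  obtain ⟨a, haCL, b, hbCL, hab, hland, rfl⟩ := mem_K2L.mp hm
  obtain ⟨ha128, hapos, _⟩ := CL_facts a haCL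
  obtain ⟨hb128, hbpos, _⟩ := CL_facts b hbCL
  have hxab : a ^^^ b < 128 := Nat.xor_lt_two_pow (n := 7) ha128 hb128
  have hi : Indep ![enc a, enc b] := by
    refine indep2_of (enc_ne_zero ha128 (by omega)) (enc_ne_zero hb128 (by omega)) ?_
    rw [← enc_xor]
    exact enc_ne_zero hxab (nat_xor_ne_zero (by omega))
  exact ⟨![enc a, enc b], hi, msetU_sm2 ha128 hb128, disj_DU_of_land hland⟩

lemma rep3 {K : Finset U7} (h : K ∈ SS K3L) : RepP 3 K := by
  obtain ⟨m, hm, rfl⟩ := mem_SS.mp h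
  obtain ⟨a, haCL, b, hbCL, c, hcCL, hab, hbc, hne, hland, rfl⟩ := mem_K3L.mp hm
  obtain ⟨ha128, hapos, _⟩ := CL_facts a haCL
  obtain ⟨hb128, hbpos, _⟩ := CL_facts b hbCL
  obtain ⟨hc128, hcpos, _⟩ := CL_facts c hcCL
  have hxab : a ^^^ b < 128 := Nat.xor_lt_two_pow (n := 7) ha128 hb128
  have hxac : a ^^^ c < 128 := Nat.xor_lt_two_pow (n := 7) ha128 hc128
  have hxbc : b ^^^ c < 128 := Nat.xor_lt_two_pow (n := 7) hb128 hc128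
  have hxabc : a ^^^ b ^^^ c < 128 := Nat.xor_lt_two_pow (n := 7) hxab hc128
  have hi : Indep ![enc a, enc b, enc c] := by
    refine indep3_of (enc_ne_zero ha128 (by omega)) (enc_ne_zero hb128 (by omega))
      (enc_ne_zero hc128 (by omega)) ?_ ?_ ?_ ?_
    · rw [← enc_xor]; exact enc_ne_zero hxab (nat_xor_ne_zero (by omega))
    · rw [← enc_xor]; exact enc_ne_zero hxac (nat_xor_ne_zero (by omega))
    · rw [← enc_xor]; exact enc_ne_zero hxbc (nat_xor_ne_zero (by omega))
    · rw [← enc_xor, ← enc_xor]; exact enc_ne_zero hxabc hne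
  exact ⟨![enc a, enc b, enc c], hi, msetU_sm3 ha128 hb128 hc128,
    disj_DU_of_land hland⟩

section CountGood

variable {V : Type*} [AddCommGroup V] [Module (ZMod 2) V] [DecidableEq V] [Fintype V]

/-- A tuple is good if its linear map is nonzero on all difference vectors. -/
def GoodT (v : Fin 7 → V) : Prop := ∀ d ∈ DU, phiJ v d ≠ 0

instance (v : Fin 7 → V) : Decidable (GoodT v) := by unfold GoodT; infer_instance

lemma fiber_card {j : ℕ} (hj : j ≤ 7) {K : Finset U7} (hK : RepP j K) :
    (Finset.univ.filter (fun v : Fin 7 → V => Kerf v = K)).card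
      = ∏ i ∈ Finset.range (7 - j), (Fintype.card V - 2 ^ i) := by
  obtain ⟨w, hw, rfl, _⟩ := hK
  exact count_ker j hj w hw

lemma card_SS_eq (L : List ℕ) (hnd : L.Nodup)
    (hlt : ∀ m ∈ L, m < 2 ^ 128) : (SS L).card = L.length := by
  rw [SS, List.toFinset_card_of_nodup, List.length_map]
  refine List.Nodup.map_on ?_ hnd
  intro m hm m' hm' e
  apply Nat.eq_of_testBit_eq
  intro i
  by_cases hi : i < 128
  · have h1 : (enc i ∈ msetU m) = (enc i ∈ msetU m') := by rw [e]
    rw [mem_msetU_enc hi, mem_msetU_enc hi] at h1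
    rw [← Bool.coe_iff_coe]
    rw [h1]
  · have hb1 : m.testBit i = false := Nat.testBit_lt_two_pow
      (lt_of_lt_of_le (hlt m hm) (Nat.pow_le_pow_right (by norm_num) (by omega)))
    have hb2 : m'.testBit i = false := Nat.testBit_lt_two_pow
      (lt_of_lt_of_le (hlt m' hm') (Nat.pow_le_pow_right (by norm_num) (by omega)))
    rw [hb1, hb2]

lemma card_SS_mem {j : ℕ} {K : Finset U7} (h : RepP j K) : K.card = 2 ^ j := by
  obtain ⟨w, hw, rfl, _⟩ := h
  rw [card_spanF hw, Fintype.card_fin]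

end CountGood

end MagicAux

namespace MagicAux

lemma K0L_len : K0L.length = 1 := rfl
lemma K1L_len : K1L.length = 43 := by decide
lemma K2L_len : K2L.length = 85 := by decide
lemma K3L_len : K3L.length = 10 := by decide

lemma K0L_nodup : K0L.Nodup := by decide
lemma K1L_nodup : K1L.Nodup := List.nodup_dedup _
lemma K2L_nodup : K2L.Nodup := List.nodup_dedup _
lemma K3L_nodup : K3L.Nodup := List.nodup_dedup _

lemma K0L_lt : ∀ m ∈ K0L, m < 2 ^ 128 := by decide
lemma K1L_lt : ∀ m ∈ K1L, m < 2 ^ 128 := by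
  intro m hm
  obtain ⟨a, haCL, rfl⟩ := mem_K1L.mp hm
  exact sm1_lt (CL_facts a haCL).1
lemma K2L_lt : ∀ m ∈ K2L, m < 2 ^ 128 := by
  intro m hm
  obtain ⟨a, haCL, b, hbCL, _, _, rfl⟩ := mem_K2L.mp hm
  exact sm2_lt (CL_facts a haCL).1 (CL_facts b hbCL).1
lemma K3L_lt : ∀ m ∈ K3L, m < 2 ^ 128 := by
  intro m hm
  obtain ⟨a, haCL, b, hbCL, c, hcCL, _, _, _, _, rfl⟩ := mem_K3L.mp hm
  exact sm3_lt (CL_facts a haCL).1 (CL_facts b hbCL).1 (CL_facts c hcCL).1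

section CountGood2

variable {V : Type*} [AddCommGroup V] [Module (ZMod 2) V] [DecidableEq V] [Fintype V]

lemma count_good :
    (Finset.univ.filter (fun v : Fin 7 → V => GoodT v)).card =
      (∏ i ∈ Finset.range 7, (Fintype.card V - 2 ^ i))
      + 43 * (∏ i ∈ Finset.range 6, (Fintype.card V - 2 ^ i))
      + 85 * (∏ i ∈ Finset.range 5, (Fintype.card V - 2 ^ i))
      + 10 * (∏ i ∈ Finset.range 4, (Fintype.card V - 2 ^ i)) := by
  classical
  set 𝒦 : Finset (Finset U7) := ((SS K0L ∪ SS K1L) ∪ SS K2L) ∪ SS K3L with h𝒦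
  have hker : ∀ v : Fin 7 → V, GoodT v → Kerf v ∈ 𝒦 := by
    intro v hv
    have h0 : (0:U7) ∈ Kerf v := mem_Kerf.mpr (phiJ_zero v)
    have hcl : ∀ a ∈ Kerf v, ∀ b ∈ Kerf v, a + b ∈ Kerf v := by
      intro a ha b hb
      rw [mem_Kerf] at ha hb ⊢
      rw [phiJ_add, ha, hb, add_zero]
    have hd : ∀ u ∈ Kerf v, u ∉ DU := by
      intro u hu hD
      exact hv u hD (mem_Kerf.mp hu)
    rcases ker_mem_SS h0 hcl hd with h | h | h | h <;>
      simp [h𝒦, Finset.mem_union, h]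
  rw [Finset.card_eq_sum_card_fiberwise
    (f := Kerf) (t := 𝒦) (fun v hv => hker v (Finset.mem_filter.mp hv).2)]
  have hfib : ∀ (j : ℕ) (K : Finset U7), j ≤ 7 → RepP j K →
      ((Finset.univ.filter (fun v : Fin 7 → V => GoodT v)).filter
        (fun v => Kerf v = K)).card
        = ∏ i ∈ Finset.range (7-j), (Fintype.card V - 2 ^ i) := by
    intro j K hj hrep
    obtain ⟨w, hw, hKeq, hKd⟩ := hrep
    have heq : (Finset.univ.filter (fun v : Fin 7 → V => GoodT v)).filter
        (fun v => Kerf v = K) = Finset.univ.filter (fun v => Kerf v = K) := by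
      ext v
      simp only [Finset.mem_filter, Finset.mem_univ, true_and]
      constructor
      · rintro ⟨_, h⟩; exact h
      · intro h
        refine ⟨?_, h⟩
        intro d hD hphi
        exact (hKd d (h ▸ mem_Kerf.mpr hphi)) hD
    rw [heq, fiber_card hj ⟨w, hw, hKeq, hKd⟩]
  have hd01 : Disjoint (SS K0L) (SS K1L) := by
    rw [Finset.disjoint_left]
    intro K h1 h2
    have := card_SS_mem (rep0 h1); have := card_SS_mem (rep1 h2); omega
  have hd02 : Disjoint (SS K0L) (SS K2L) := by
    rw [Finset.disjoint_left]
    intro K h1 h2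
    have := card_SS_mem (rep0 h1); have := card_SS_mem (rep2 h2); omega
  have hd12 : Disjoint (SS K1L) (SS K2L) := by
    rw [Finset.disjoint_left]
    intro K h1 h2
    have := card_SS_mem (rep1 h1); have := card_SS_mem (rep2 h2); omega
  have hd03 : Disjoint (SS K0L) (SS K3L) := by
    rw [Finset.disjoint_left]
    intro K h1 h2
    have := card_SS_mem (rep0 h1); have := card_SS_mem (rep3 h2); omega
  have hd13 : Disjoint (SS K1L) (SS K3L) := by
    rw [Finset.disjoint_left]
    intro K h1 h2
    have := card_SS_mem (rep1 h1); have := card_SS_mem (rep3 h2); omega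
  have hd23 : Disjoint (SS K2L) (SS K3L) := by
    rw [Finset.disjoint_left]
    intro K h1 h2
    have := card_SS_mem (rep2 h1); have := card_SS_mem (rep3 h2); omega
  rw [h𝒦, Finset.sum_union (by
    rw [Finset.disjoint_union_left]
    exact ⟨by rw [Finset.disjoint_union_left]; exact ⟨hd03, hd13⟩, hd23⟩)]
  rw [Finset.sum_union (by rw [Finset.disjoint_union_left]; exact ⟨hd02, hd12⟩)]
  rw [Finset.sum_union hd01]
  have e0 : ∑ K ∈ SS K0L, ((Finset.univ.filter (fun v : Fin 7 → V => GoodT v)).filter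
      (fun v => Kerf v = K)).card = 1 * ∏ i ∈ Finset.range 7, (Fintype.card V - 2 ^ i) := by
    rw [Finset.sum_congr rfl (fun K hK => hfib 0 K (by omega) (rep0 hK)),
      Finset.sum_const, smul_eq_mul, card_SS_eq _ K0L_nodup K0L_lt, K0L_len]
  have e1 : ∑ K ∈ SS K1L, ((Finset.univ.filter (fun v : Fin 7 → V => GoodT v)).filter
      (fun v => Kerf v = K)).card = 43 * ∏ i ∈ Finset.range 6, (Fintype.card V - 2 ^ i) := by
    rw [Finset.sum_congr rfl (fun K hK => hfib 1 K (by omega) (rep1 hK)),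
      Finset.sum_const, smul_eq_mul, card_SS_eq _ K1L_nodup K1L_lt, K1L_len]
  have e2 : ∑ K ∈ SS K2L, ((Finset.univ.filter (fun v : Fin 7 → V => GoodT v)).filter
      (fun v => Kerf v = K)).card = 85 * ∏ i ∈ Finset.range 5, (Fintype.card V - 2 ^ i) := by
    rw [Finset.sum_congr rfl (fun K hK => hfib 2 K (by omega) (rep2 hK)),
      Finset.sum_const, smul_eq_mul, card_SS_eq _ K2L_nodup K2L_lt, K2L_len]
  have e3 : ∑ K ∈ SS K3L, ((Finset.univ.filter (fun v : Fin 7 → V => GoodT v)).filter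
      (fun v => Kerf v = K)).card = 10 * ∏ i ∈ Finset.range 4, (Fintype.card V - 2 ^ i) := by
    rw [Finset.sum_congr rfl (fun K hK => hfib 3 K (by omega) (rep3 hK)),
      Finset.sum_const, smul_eq_mul, card_SS_eq _ K3L_nodup K3L_lt, K3L_len]
  rw [e0, e1, e2, e3]
  ring

end CountGood2

end MagicAux


namespace MagicAux

variable {n : ℕ}

def pvt : Fin 7 → Fin 4 × Fin 4 := ![(1,3),(2,1),(2,2),(2,3),(3,1),(3,2),(3,3)]

/-- The parametrization of magic squares. -/
def Emap (c : Deck n) (v : Fin 7 → Deck n) : Fin 4 × Fin 4 → Deck n :=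
  fun p => c + phiJ v (hU p)

lemma hh (x : Deck n) : x + x = 0 := addself x

lemma hU_row : ∀ i : Fin 4, hU (i,0) + hU (i,1) + hU (i,2) + hU (i,3) = 0 := by decide
lemma hU_col : ∀ j : Fin 4, hU (0,j) + hU (1,j) + hU (2,j) + hU (3,j) = 0 := by decide
lemma hU_diag : hU (0,0) + hU (1,1) + hU (2,2) + hU (3,3) = 0 := by decide
lemma hU_anti : hU (0,3) + hU (1,2) + hU (2,1) + hU (3,0) = 0 := by decide
lemma hU_00 : hU (0,0) = (0 : U7) := by decide
lemma hU_pvt : ∀ k : Fin 7, hU (pvt k) = Pi.single k 1 := by decide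

lemma Emap_magic (c : Deck n) (v : Fin 7 → Deck n) : IsMagic (Emap c v) := by
  refine ⟨⟨?_, ?_⟩, ?_, ?_⟩
  · intro i
    rw [Fin.sum_univ_four]
    have h4 : phiJ v (hU (i,0)) + phiJ v (hU (i,1)) + phiJ v (hU (i,2))
        + phiJ v (hU (i,3)) = 0 := by
      rw [← phiJ_add, ← phiJ_add, ← phiJ_add, hU_row i, phiJ_zero]
    show (c + phiJ v (hU (i,0))) + (c + phiJ v (hU (i,1))) + (c + phiJ v (hU (i,2)))
        + (c + phiJ v (hU (i,3))) = 0
    linear_combination h4 + 2 * hh c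
  · intro j
    rw [Fin.sum_univ_four]
    have h4 : phiJ v (hU (0,j)) + phiJ v (hU (1,j)) + phiJ v (hU (2,j))
        + phiJ v (hU (3,j)) = 0 := by
      rw [← phiJ_add, ← phiJ_add, ← phiJ_add, hU_col j, phiJ_zero]
    show (c + phiJ v (hU (0,j))) + (c + phiJ v (hU (1,j))) + (c + phiJ v (hU (2,j)))
        + (c + phiJ v (hU (3,j))) = 0
    linear_combination h4 + 2 * hh c
  · rw [Fin.sum_univ_four]
    have h4 : phiJ v (hU (0,0)) + phiJ v (hU (1,1)) + phiJ v (hU (2,2))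
        + phiJ v (hU (3,3)) = 0 := by
      rw [← phiJ_add, ← phiJ_add, ← phiJ_add, hU_diag, phiJ_zero]
    show (c + phiJ v (hU (0,0))) + (c + phiJ v (hU (1,1))) + (c + phiJ v (hU (2,2)))
        + (c + phiJ v (hU (3,3))) = 0
    linear_combination h4 + 2 * hh c
  · rw [Fin.sum_univ_four]
    rw [show (3 - (0:Fin 4)) = 3 from by decide, show (3 - (1:Fin 4)) = 2 from by decide,
      show (3 - (2:Fin 4)) = 1 from by decide, show (3 - (3:Fin 4)) = 0 from by decide]
    have h4 : phiJ v (hU (0,3)) + phiJ v (hU (1,2)) + phiJ v (hU (2,1))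
        + phiJ v (hU (3,0)) = 0 := by
      rw [← phiJ_add, ← phiJ_add, ← phiJ_add, hU_anti, phiJ_zero]
    show (c + phiJ v (hU (0,3))) + (c + phiJ v (hU (1,2))) + (c + phiJ v (hU (2,1)))
        + (c + phiJ v (hU (3,0))) = 0
    linear_combination h4 + 2 * hh c

lemma Emap_zero (c : Deck n) (v : Fin 7 → Deck n) : Emap c v (0,0) = c := by
  show c + phiJ v (hU (0,0)) = c
  rw [hU_00, phiJ_zero, add_zero]

lemma Emap_pvt (c : Deck n) (v : Fin 7 → Deck n) (k : Fin 7) :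
    Emap c v (pvt k) = c + v k := by
  show c + phiJ v (hU (pvt k)) = c + v k
  rw [hU_pvt k, phiJ_single]

lemma Emap_inj_iff (c : Deck n) (v : Fin 7 → Deck n) :
    Function.Injective (Emap c v) ↔ GoodT v := by
  constructor
  · intro hinj d hD hphi
    obtain ⟨p, q, hpq, rfl⟩ := DU_covered d hD
    rw [phiJ_add] at hphi
    have heq : Emap c v p = Emap c v q := by
      show c + phiJ v (hU p) = c + phiJ v (hU q)
      rw [add_eq_zero_iff.mp hphi]
    exact hpq (hinj heq)
  · intro hgood p q heq
    by_contra hne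
    have h1 : phiJ v (hU p) = phiJ v (hU q) := by
      have h2 : c + phiJ v (hU p) = c + phiJ v (hU q) := heq
      exact add_left_cancel h2
    have h2 : phiJ v (hU p + hU q) = 0 := by
      rw [phiJ_add, h1, addself]
    exact hgood _ (hU_mem_DU hne) h2

lemma magic_eq_Emap {M : Fin 4 × Fin 4 → Deck n} (hM : IsMagic M) :
    Emap (M (0,0)) (fun k => M (pvt k) + M (0,0)) = M := by
  have R0 := hM.1.1 0
  have R1 := hM.1.1 1
  have R2 := hM.1.1 2
  have R3 := hM.1.1 3
  have Co0 := hM.1.2 0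
  have Co1 := hM.1.2 1
  have Co2 := hM.1.2 2
  have Co3 := hM.1.2 3
  have Dg := hM.2.1
  have Ad := hM.2.2
  rw [Fin.sum_univ_four] at R0 R1 R2 R3 Co0 Co1 Co2 Co3 Dg Ad
  rw [show (3 - (0:Fin 4)) = 3 from by decide, show (3 - (1:Fin 4)) = 2 from by decide,
    show (3 - (2:Fin 4)) = 1 from by decide, show (3 - (3:Fin 4)) = 0 from by decide] at Ad
  clear hM
  funext p
  rcases p with ⟨i, j⟩
  fin_cases i <;> fin_cases j
  · -- position (0,0)
    show M (0,0) + phiJ (fun k => M (pvt k) + M (0,0)) (hU (0,0)) = M (0,0)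
    rw [phiJ, Fin.sum_univ_seven]
    rw [show hU ((0:Fin 4),(0:Fin 4)) 0 = 0 from by decide, show hU ((0:Fin 4),(0:Fin 4)) 1 = 0 from by decide, show hU ((0:Fin 4),(0:Fin 4)) 2 = 0 from by decide, show hU ((0:Fin 4),(0:Fin 4)) 3 = 0 from by decide, show hU ((0:Fin 4),(0:Fin 4)) 4 = 0 from by decide, show hU ((0:Fin 4),(0:Fin 4)) 5 = 0 from by decide, show hU ((0:Fin 4),(0:Fin 4)) 6 = 0 from by decide]
    simp only [zero_smul, one_smul, add_zero, zero_add]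
  · -- position (0,1)
    show M (0,0) + phiJ (fun k => M (pvt k) + M (0,0)) (hU (0,1)) = M (0,1)
    rw [phiJ, Fin.sum_univ_seven]
    rw [show hU ((0:Fin 4),(1:Fin 4)) 0 = 0 from by decide, show hU ((0:Fin 4),(1:Fin 4)) 1 = 1 from by decide, show hU ((0:Fin 4),(1:Fin 4)) 2 = 1 from by decide, show hU ((0:Fin 4),(1:Fin 4)) 3 = 0 from by decide, show hU ((0:Fin 4),(1:Fin 4)) 4 = 1 from by decide, show hU ((0:Fin 4),(1:Fin 4)) 5 = 0 from by decide, show hU ((0:Fin 4),(1:Fin 4)) 6 = 1 from by decide]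
    simp only [zero_smul, one_smul, add_zero, zero_add]
    rw [show pvt 1 = (2,1) from by decide, show pvt 2 = (2,2) from by decide, show pvt 4 = (3,1) from by decide, show pvt 6 = (3,3) from by decide]
    linear_combination Co1 + Dg + 2 * hh (M (0,0)) - hh (M (0,1)) - hh (M (1,1))
  · -- position (0,2)
    show M (0,0) + phiJ (fun k => M (pvt k) + M (0,0)) (hU (0,2)) = M (0,2)
    rw [phiJ, Fin.sum_univ_seven]
    rw [show hU ((0:Fin 4),(2:Fin 4)) 0 = 1 from by decide, show hU ((0:Fin 4),(2:Fin 4)) 1 = 1 from by decide, show hU ((0:Fin 4),(2:Fin 4)) 2 = 1 from by decide, show hU ((0:Fin 4),(2:Fin 4)) 3 = 1 from by decide, show hU ((0:Fin 4),(2:Fin 4)) 4 = 1 from by decide, show hU ((0:Fin 4),(2:Fin 4)) 5 = 0 from by decide, show hU ((0:Fin 4),(2:Fin 4)) 6 = 0 from by decide]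
    simp only [zero_smul, one_smul, add_zero, zero_add]
    rw [show pvt 0 = (1,3) from by decide, show pvt 1 = (2,1) from by decide, show pvt 2 = (2,2) from by decide, show pvt 3 = (2,3) from by decide, show pvt 4 = (3,1) from by decide]
    linear_combination R0 + Co1 + Co3 + Dg + 2 * hh (M (0,0)) - hh (M (0,1)) - hh (M (0,2)) - hh (M (0,3)) - hh (M (1,1)) - hh (M (3,3))
  · -- position (0,3)
    show M (0,0) + phiJ (fun k => M (pvt k) + M (0,0)) (hU (0,3)) = M (0,3)
    rw [phiJ, Fin.sum_univ_seven]
    rw [show hU ((0:Fin 4),(3:Fin 4)) 0 = 1 from by decide, show hU ((0:Fin 4),(3:Fin 4)) 1 = 0 from by decide, show hU ((0:Fin 4),(3:Fin 4)) 2 = 0 from by decide, show hU ((0:Fin 4),(3:Fin 4)) 3 = 1 from by decide, show hU ((0:Fin 4),(3:Fin 4)) 4 = 0 from by decide, show hU ((0:Fin 4),(3:Fin 4)) 5 = 0 from by decide, show hU ((0:Fin 4),(3:Fin 4)) 6 = 1 from by decide]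
    simp only [zero_smul, one_smul, add_zero, zero_add]
    rw [show pvt 0 = (1,3) from by decide, show pvt 3 = (2,3) from by decide, show pvt 6 = (3,3) from by decide]
    linear_combination Co3 + 2 * hh (M (0,0)) - hh (M (0,3))
  · -- position (1,0)
    show M (0,0) + phiJ (fun k => M (pvt k) + M (0,0)) (hU (1,0)) = M (1,0)
    rw [phiJ, Fin.sum_univ_seven]
    rw [show hU ((1:Fin 4),(0:Fin 4)) 0 = 0 from by decide, show hU ((1:Fin 4),(0:Fin 4)) 1 = 1 from by decide, show hU ((1:Fin 4),(0:Fin 4)) 2 = 1 from by decide, show hU ((1:Fin 4),(0:Fin 4)) 3 = 1 from by decide, show hU ((1:Fin 4),(0:Fin 4)) 4 = 1 from by decide, show hU ((1:Fin 4),(0:Fin 4)) 5 = 1 from by decide, show hU ((1:Fin 4),(0:Fin 4)) 6 = 1 from by decide]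
    simp only [zero_smul, one_smul, add_zero, zero_add]
    rw [show pvt 1 = (2,1) from by decide, show pvt 2 = (2,2) from by decide, show pvt 3 = (2,3) from by decide, show pvt 4 = (3,1) from by decide, show pvt 5 = (3,2) from by decide, show pvt 6 = (3,3) from by decide]
    linear_combination R2 + R3 + Co0 + 3 * hh (M (0,0)) - hh (M (1,0)) - hh (M (2,0)) - hh (M (3,0))
  · -- position (1,1)
    show M (0,0) + phiJ (fun k => M (pvt k) + M (0,0)) (hU (1,1)) = M (1,1)
    rw [phiJ, Fin.sum_univ_seven]
    rw [show hU ((1:Fin 4),(1:Fin 4)) 0 = 0 from by decide, show hU ((1:Fin 4),(1:Fin 4)) 1 = 0 from by decide, show hU ((1:Fin 4),(1:Fin 4)) 2 = 1 from by decide, show hU ((1:Fin 4),(1:Fin 4)) 3 = 0 from by decide, show hU ((1:Fin 4),(1:Fin 4)) 4 = 0 from by decide, show hU ((1:Fin 4),(1:Fin 4)) 5 = 0 from by decide, show hU ((1:Fin 4),(1:Fin 4)) 6 = 1 from by decide]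
    simp only [zero_smul, one_smul, add_zero, zero_add]
    rw [show pvt 2 = (2,2) from by decide, show pvt 6 = (3,3) from by decide]
    linear_combination Dg + hh (M (0,0)) - hh (M (1,1))
  · -- position (1,2)
    show M (0,0) + phiJ (fun k => M (pvt k) + M (0,0)) (hU (1,2)) = M (1,2)
    rw [phiJ, Fin.sum_univ_seven]
    rw [show hU ((1:Fin 4),(2:Fin 4)) 0 = 1 from by decide, show hU ((1:Fin 4),(2:Fin 4)) 1 = 1 from by decide, show hU ((1:Fin 4),(2:Fin 4)) 2 = 0 from by decide, show hU ((1:Fin 4),(2:Fin 4)) 3 = 1 from by decide, show hU ((1:Fin 4),(2:Fin 4)) 4 = 1 from by decide, show hU ((1:Fin 4),(2:Fin 4)) 5 = 1 from by decide, show hU ((1:Fin 4),(2:Fin 4)) 6 = 0 from by decide]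
    simp only [zero_smul, one_smul, add_zero, zero_add]
    rw [show pvt 0 = (1,3) from by decide, show pvt 1 = (2,1) from by decide, show pvt 3 = (2,3) from by decide, show pvt 4 = (3,1) from by decide, show pvt 5 = (3,2) from by decide]
    linear_combination R3 + Co3 + Ad + 3 * hh (M (0,0)) - hh (M (0,3)) - hh (M (1,2)) - hh (M (3,0)) - hh (M (3,3))
  · -- position (1,3)
    show M (0,0) + phiJ (fun k => M (pvt k) + M (0,0)) (hU (1,3)) = M (1,3)
    rw [phiJ, Fin.sum_univ_seven]
    rw [show hU ((1:Fin 4),(3:Fin 4)) 0 = 1 from by decide, show hU ((1:Fin 4),(3:Fin 4)) 1 = 0 from by decide, show hU ((1:Fin 4),(3:Fin 4)) 2 = 0 from by decide, show hU ((1:Fin 4),(3:Fin 4)) 3 = 0 from by decide, show hU ((1:Fin 4),(3:Fin 4)) 4 = 0 from by decide, show hU ((1:Fin 4),(3:Fin 4)) 5 = 0 from by decide, show hU ((1:Fin 4),(3:Fin 4)) 6 = 0 from by decide]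
    simp only [zero_smul, one_smul, add_zero, zero_add]
    rw [show pvt 0 = (1,3) from by decide]
    linear_combination hh (M (0,0))
  · -- position (2,0)
    show M (0,0) + phiJ (fun k => M (pvt k) + M (0,0)) (hU (2,0)) = M (2,0)
    rw [phiJ, Fin.sum_univ_seven]
    rw [show hU ((2:Fin 4),(0:Fin 4)) 0 = 0 from by decide, show hU ((2:Fin 4),(0:Fin 4)) 1 = 1 from by decide, show hU ((2:Fin 4),(0:Fin 4)) 2 = 1 from by decide, show hU ((2:Fin 4),(0:Fin 4)) 3 = 1 from by decide, show hU ((2:Fin 4),(0:Fin 4)) 4 = 0 from by decide, show hU ((2:Fin 4),(0:Fin 4)) 5 = 0 from by decide, show hU ((2:Fin 4),(0:Fin 4)) 6 = 0 from by decide]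
    simp only [zero_smul, one_smul, add_zero, zero_add]
    rw [show pvt 1 = (2,1) from by decide, show pvt 2 = (2,2) from by decide, show pvt 3 = (2,3) from by decide]
    linear_combination R2 + 2 * hh (M (0,0)) - hh (M (2,0))
  · -- position (2,1)
    show M (0,0) + phiJ (fun k => M (pvt k) + M (0,0)) (hU (2,1)) = M (2,1)
    rw [phiJ, Fin.sum_univ_seven]
    rw [show hU ((2:Fin 4),(1:Fin 4)) 0 = 0 from by decide, show hU ((2:Fin 4),(1:Fin 4)) 1 = 1 from by decide, show hU ((2:Fin 4),(1:Fin 4)) 2 = 0 from by decide, show hU ((2:Fin 4),(1:Fin 4)) 3 = 0 from by decide, show hU ((2:Fin 4),(1:Fin 4)) 4 = 0 from by decide, show hU ((2:Fin 4),(1:Fin 4)) 5 = 0 from by decide, show hU ((2:Fin 4),(1:Fin 4)) 6 = 0 from by decide]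
    simp only [zero_smul, one_smul, add_zero, zero_add]
    rw [show pvt 1 = (2,1) from by decide]
    linear_combination hh (M (0,0))
  · -- position (2,2)
    show M (0,0) + phiJ (fun k => M (pvt k) + M (0,0)) (hU (2,2)) = M (2,2)
    rw [phiJ, Fin.sum_univ_seven]
    rw [show hU ((2:Fin 4),(2:Fin 4)) 0 = 0 from by decide, show hU ((2:Fin 4),(2:Fin 4)) 1 = 0 from by decide, show hU ((2:Fin 4),(2:Fin 4)) 2 = 1 from by decide, show hU ((2:Fin 4),(2:Fin 4)) 3 = 0 from by decide, show hU ((2:Fin 4),(2:Fin 4)) 4 = 0 from by decide, show hU ((2:Fin 4),(2:Fin 4)) 5 = 0 from by decide, show hU ((2:Fin 4),(2:Fin 4)) 6 = 0 from by decide]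
    simp only [zero_smul, one_smul, add_zero, zero_add]
    rw [show pvt 2 = (2,2) from by decide]
    linear_combination hh (M (0,0))
  · -- position (2,3)
    show M (0,0) + phiJ (fun k => M (pvt k) + M (0,0)) (hU (2,3)) = M (2,3)
    rw [phiJ, Fin.sum_univ_seven]
    rw [show hU ((2:Fin 4),(3:Fin 4)) 0 = 0 from by decide, show hU ((2:Fin 4),(3:Fin 4)) 1 = 0 from by decide, show hU ((2:Fin 4),(3:Fin 4)) 2 = 0 from by decide, show hU ((2:Fin 4),(3:Fin 4)) 3 = 1 from by decide, show hU ((2:Fin 4),(3:Fin 4)) 4 = 0 from by decide, show hU ((2:Fin 4),(3:Fin 4)) 5 = 0 from by decide, show hU ((2:Fin 4),(3:Fin 4)) 6 = 0 from by decide]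
    simp only [zero_smul, one_smul, add_zero, zero_add]
    rw [show pvt 3 = (2,3) from by decide]
    linear_combination hh (M (0,0))
  · -- position (3,0)
    show M (0,0) + phiJ (fun k => M (pvt k) + M (0,0)) (hU (3,0)) = M (3,0)
    rw [phiJ, Fin.sum_univ_seven]
    rw [show hU ((3:Fin 4),(0:Fin 4)) 0 = 0 from by decide, show hU ((3:Fin 4),(0:Fin 4)) 1 = 0 from by decide, show hU ((3:Fin 4),(0:Fin 4)) 2 = 0 from by decide, show hU ((3:Fin 4),(0:Fin 4)) 3 = 0 from by decide, show hU ((3:Fin 4),(0:Fin 4)) 4 = 1 from by decide, show hU ((3:Fin 4),(0:Fin 4)) 5 = 1 from by decide, show hU ((3:Fin 4),(0:Fin 4)) 6 = 1 from by decide]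
    simp only [zero_smul, one_smul, add_zero, zero_add]
    rw [show pvt 4 = (3,1) from by decide, show pvt 5 = (3,2) from by decide, show pvt 6 = (3,3) from by decide]
    linear_combination R3 + 2 * hh (M (0,0)) - hh (M (3,0))
  · -- position (3,1)
    show M (0,0) + phiJ (fun k => M (pvt k) + M (0,0)) (hU (3,1)) = M (3,1)
    rw [phiJ, Fin.sum_univ_seven]
    rw [show hU ((3:Fin 4),(1:Fin 4)) 0 = 0 from by decide, show hU ((3:Fin 4),(1:Fin 4)) 1 = 0 from by decide, show hU ((3:Fin 4),(1:Fin 4)) 2 = 0 from by decide, show hU ((3:Fin 4),(1:Fin 4)) 3 = 0 from by decide, show hU ((3:Fin 4),(1:Fin 4)) 4 = 1 from by decide, show hU ((3:Fin 4),(1:Fin 4)) 5 = 0 from by decide, show hU ((3:Fin 4),(1:Fin 4)) 6 = 0 from by decide]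
    simp only [zero_smul, one_smul, add_zero, zero_add]
    rw [show pvt 4 = (3,1) from by decide]
    linear_combination hh (M (0,0))
  · -- position (3,2)
    show M (0,0) + phiJ (fun k => M (pvt k) + M (0,0)) (hU (3,2)) = M (3,2)
    rw [phiJ, Fin.sum_univ_seven]
    rw [show hU ((3:Fin 4),(2:Fin 4)) 0 = 0 from by decide, show hU ((3:Fin 4),(2:Fin 4)) 1 = 0 from by decide, show hU ((3:Fin 4),(2:Fin 4)) 2 = 0 from by decide, show hU ((3:Fin 4),(2:Fin 4)) 3 = 0 from by decide, show hU ((3:Fin 4),(2:Fin 4)) 4 = 0 from by decide, show hU ((3:Fin 4),(2:Fin 4)) 5 = 1 from by decide, show hU ((3:Fin 4),(2:Fin 4)) 6 = 0 from by decide]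
    simp only [zero_smul, one_smul, add_zero, zero_add]
    rw [show pvt 5 = (3,2) from by decide]
    linear_combination hh (M (0,0))
  · -- position (3,3)
    show M (0,0) + phiJ (fun k => M (pvt k) + M (0,0)) (hU (3,3)) = M (3,3)
    rw [phiJ, Fin.sum_univ_seven]
    rw [show hU ((3:Fin 4),(3:Fin 4)) 0 = 0 from by decide, show hU ((3:Fin 4),(3:Fin 4)) 1 = 0 from by decide, show hU ((3:Fin 4),(3:Fin 4)) 2 = 0 from by decide, show hU ((3:Fin 4),(3:Fin 4)) 3 = 0 from by decide, show hU ((3:Fin 4),(3:Fin 4)) 4 = 0 from by decide, show hU ((3:Fin 4),(3:Fin 4)) 5 = 0 from by decide, show hU ((3:Fin 4),(3:Fin 4)) 6 = 1 from by decide]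
    simp only [zero_smul, one_smul, add_zero, zero_add]
    rw [show pvt 6 = (3,3) from by decide]
    linear_combination hh (M (0,0))

end MagicAux

namespace MagicAux

variable {n : ℕ}

def E1 (n : ℕ) : {p : Deck n × (Fin 7 → Deck n) // GoodT p.2} ≃
    {M : Fin 4 × Fin 4 → Deck n // Function.Injective M ∧ IsMagic M} where
  toFun q := ⟨Emap q.val.1 q.val.2, (Emap_inj_iff _ _).mpr q.property, Emap_magic _ _⟩
  invFun s := ⟨(s.val (0,0), fun k => s.val (pvt k) + s.val (0,0)), by
    have h := magic_eq_Emap s.property.2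
    have hinj : Function.Injective
        (Emap (s.val (0,0)) (fun k => s.val (pvt k) + s.val (0,0))) := by
      rw [h]; exact s.property.1
    exact (Emap_inj_iff _ _).mp hinj⟩
  left_inv := by
    rintro ⟨⟨c, v⟩, h⟩
    apply Subtype.ext
    simp only
    have h1 : Emap c v (0,0) = c := Emap_zero c v
    have h2 : (fun k => Emap c v (pvt k) + Emap c v (0,0)) = v := by
      funext k
      rw [Emap_pvt, Emap_zero]
      linear_combination hh c
    rw [Prod.mk.injEq]
    exact ⟨h1, h2⟩
  right_inv := by
    rintro ⟨M, hinj, hM⟩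
    apply Subtype.ext
    exact magic_eq_Emap hM

def E2 (n : ℕ) : {p : Deck n × (Fin 7 → Deck n) // GoodT p.2} ≃
    Deck n × {v : Fin 7 → Deck n // GoodT v} where
  toFun q := (q.val.1, ⟨q.val.2, q.property⟩)
  invFun r := ⟨(r.1, r.2.val), r.2.property⟩
  left_inv := by rintro ⟨⟨c, v⟩, h⟩; rfl
  right_inv := by rintro ⟨c, v, h⟩; rfl

lemma card_deck : Nat.card (Deck n) = 2 ^ n := by
  simp [Nat.card_eq_fintype_card, Fintype.card_fun]

lemma card_magic (n : ℕ) :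
    Nat.card {M : Fin 4 × Fin 4 → Deck n // Function.Injective M ∧ IsMagic M}
      = 2 ^ n * ((∏ i ∈ Finset.range 7, (2 ^ n - 2 ^ i))
        + 43 * (∏ i ∈ Finset.range 6, (2 ^ n - 2 ^ i))
        + 85 * (∏ i ∈ Finset.range 5, (2 ^ n - 2 ^ i))
        + 10 * (∏ i ∈ Finset.range 4, (2 ^ n - 2 ^ i))) := by
  rw [← Nat.card_congr (E1 n), Nat.card_congr (E2 n), Nat.card_prod, card_deck]
  congr 1
  have hcV : Fintype.card (Deck n) = 2 ^ n := by
    rw [Fintype.card_fun]; simp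
  rw [Nat.card_eq_fintype_card, Fintype.card_subtype, count_good (V := Deck n), hcV]

lemma cast_prod (n m : ℕ) (hn : 4 ≤ n) :
    ((∏ i ∈ Finset.range m, (2 ^ n - 2 ^ i) : ℕ) : ℤ)
      = ∏ i ∈ Finset.range m, ((2:ℤ) ^ n - 2 ^ i) := by
  rcases le_or_gt m n with h | h
  · rw [Nat.cast_prod]
    refine Finset.prod_congr rfl fun i hi => ?_
    rw [Finset.mem_range] at hi
    have h2 : (2:ℕ) ^ i ≤ 2 ^ n := Nat.pow_le_pow_right (by norm_num) (by omega)
    rw [Nat.cast_sub h2]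
    push_cast
    ring
  · have hmem : n ∈ Finset.range m := Finset.mem_range.mpr h
    have h1 : (∏ i ∈ Finset.range m, (2 ^ n - 2 ^ i) : ℕ) = 0 :=
      Finset.prod_eq_zero hmem (by simp)
    have h2 : (∏ i ∈ Finset.range m, ((2:ℤ) ^ n - 2 ^ i)) = 0 :=
      Finset.prod_eq_zero hmem (by simp)
    rw [h1, h2]
    simp

end MagicAux

theorem magic_count (n : ℕ) (hn : 4 ≤ n) :
    (Nat.card {M : Fin 4 × Fin 4 → Deck n // Function.Injective M ∧ IsMagic M} : ℤ) =
      2 ^ n * (2 ^ n - 1) * (2 ^ n - 2) * (2 ^ n - 4) * (2 ^ n - 8) *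
        (10 + 85 * (2 ^ n - 16) + 43 * (2 ^ n - 16) * (2 ^ n - 32) +
          (2 ^ n - 16) * (2 ^ n - 32) * (2 ^ n - 64)) := by
  rw [MagicAux.card_magic n]
  rw [Nat.cast_mul, Nat.cast_add, Nat.cast_add, Nat.cast_add, Nat.cast_mul,
    Nat.cast_mul, Nat.cast_mul]
  rw [MagicAux.cast_prod n 7 hn, MagicAux.cast_prod n 6 hn,
    MagicAux.cast_prod n 5 hn, MagicAux.cast_prod n 4 hn]
  simp only [Finset.prod_range_succ, Finset.prod_range_zero, one_mul]
  push_cast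
  ring
#print axioms magic_count
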